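/- The nontrivial proper normal subgroups of G_{p,q} are exactly the following six subgroups: N_p = {(a^{qs},1) : 0 ≤ s ≤ p−1}, N_q = {(a^{ps},1) : 0 ≤ s ≤ q−1}, N¹_{pq} = {(a^l,1) : 0 ≤ l ≤ pq−1}, N²_{pq} = {(a^{qs}, c^m) : 0 ≤ s ≤ p−1, 0 ≤ m ≤ q−1}, N_{2pq} = {(b^ε a^l, 1) : ε ∈ {0,1}, 0 ≤ l ≤ pq−1}, and N_{pq²} = {(a^l, c^m) : 0 ≤ l ≤ pq−1, 0 ≤ m ≤ q−1}. Moreover N_p ≅ C_p, N_q ≅ C_q, N¹_{pq} ≅ C_{pq}, N²_{pq} ≅ F_{p,q} (the nonabelian group of order pq), and N_{2pq} ≅ D_{2pq}. -/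

import Mathlib

open Multiplicative

namespace Mizerka

/-- The standing hypotheses: `p` and `q` are odd primes with `q ∣ p - 1`, and `i` is a
natural number with `i ≡ 1 (mod q)` whose multiplicative order modulo `p` equals `q`. -/
structure Hyp (p q i : ℕ) : Prop where
  hp : Nat.Prime p
  hq : Nat.Prime q
  hoddp : Odd p
  hoddq : Odd q
  hdvd : q ∣ p - 1
  hmod : i ≡ 1 [MOD q]
  hord : orderOf (i : ZMod p) = q

namespace Hyp

variable {p q i : ℕ}

theorem coprime_q (h : Hyp p q i) : Nat.Coprime i q := by
  have h1 : i % q = 1 % q := h.hmod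
  unfold Nat.Coprime
  rw [Nat.gcd_comm, Nat.gcd_rec, h1, ← Nat.gcd_rec, Nat.gcd_one_right]

theorem coprime_p (h : Hyp p q i) : Nat.Coprime i p := by
  haveI : NeZero p := ⟨h.hp.ne_zero⟩
  have hq1 : q - 1 + 1 = q := Nat.succ_pred_eq_of_pos h.hq.pos
  have hmul : (i : ZMod p) * (i : ZMod p) ^ (q - 1) = 1 := by
    rw [← pow_succ', hq1, ← h.hord, pow_orderOf_eq_one]
  exact (ZMod.isUnit_iff_coprime i p).mp (IsUnit.of_mul_eq_one _ hmul)

theorem coprime (h : Hyp p q i) : Nat.Coprime i (p * q) :=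
  Nat.Coprime.mul_right h.coprime_p h.coprime_q

theorem pow_q_modeq (h : Hyp p q i) : i ^ q ≡ 1 [MOD p * q] := by
  have hpq : p ≠ q := by
    have h1 : 0 < p - 1 := by have := h.hp.two_le; omega
    have := Nat.le_of_dvd h1 h.hdvd
    omega
  have hc : Nat.Coprime p q := (Nat.coprime_primes h.hp h.hq).mpr hpq
  rw [← Nat.modEq_and_modEq_iff_modEq_mul hc]
  constructor
  · haveI : NeZero p := ⟨h.hp.ne_zero⟩
    have hcast : ((i ^ q : ℕ) : ZMod p) = ((1 : ℕ) : ZMod p) := by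
      push_cast
      rw [← h.hord, pow_orderOf_eq_one]
    exact (ZMod.natCast_eq_natCast_iff _ _ _).mp hcast
  · calc i ^ q ≡ 1 ^ q [MOD q] := h.hmod.pow q
      _ = 1 := one_pow q

/-- The unit of `ZMod (p*q)` determined by `i`. -/
def unit (h : Hyp p q i) : (ZMod (p * q))ˣ := ZMod.unitOfCoprime i h.coprime

/-- The unit of `ZMod p` determined by `i`. -/
def unitP (h : Hyp p q i) : (ZMod p)ˣ := ZMod.unitOfCoprime i h.coprime_p

theorem unit_pow (h : Hyp p q i) : h.unit ^ q = 1 := by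
  apply Units.ext
  have h2 : ((i ^ q : ℕ) : ZMod (p * q)) = ((1 : ℕ) : ZMod (p * q)) :=
    (ZMod.natCast_eq_natCast_iff _ _ _).mpr h.pow_q_modeq
  push_cast at h2
  simpa [Hyp.unit] using h2

theorem unitP_pow (h : Hyp p q i) : h.unitP ^ q = 1 := by
  apply Units.ext
  have h2 : (i : ZMod p) ^ q = 1 := by rw [← h.hord]; exact pow_orderOf_eq_one _
  simpa [Hyp.unitP] using h2

end Hyp

/-- Multiplication by a unit, as an automorphism of the (multiplicatively written)
cyclic group `ZMod n`. -/
def zmodMulAut (n : ℕ) : (ZMod n)ˣ →* MulAut (Multiplicative (ZMod n)) where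
  toFun u :=
    { toFun := fun x => ofAdd ((u : ZMod n) * x.toAdd)
      invFun := fun x => ofAdd (((u⁻¹ : (ZMod n)ˣ) : ZMod n) * x.toAdd)
      left_inv := fun x => by simp
      right_inv := fun x => by simp
      map_mul' := fun x y => by simp [mul_add, ← ofAdd_add] }
  map_one' := by ext x; simp
  map_mul' u v := by ext x; simp [mul_assoc]

/-- The function underlying the automorphism of the dihedral group induced by
multiplication by a unit on the rotation part. -/
def dihedralAutFun (n : ℕ) (u : (ZMod n)ˣ) : DihedralGroup n → DihedralGroup n
  | .r j => .r ((u : ZMod n) * j)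
  | .sr j => .sr ((u : ZMod n) * j)

/-- Multiplication of indices by a unit, as an automorphism of the dihedral group:
`a ↦ a^u`, `b ↦ b`. -/
def dihedralAut (n : ℕ) : (ZMod n)ˣ →* MulAut (DihedralGroup n) where
  toFun u :=
    { toFun := dihedralAutFun n u
      invFun := dihedralAutFun n u⁻¹
      left_inv := fun x => by cases x <;> simp [dihedralAutFun]
      right_inv := fun x => by cases x <;> simp [dihedralAutFun]
      map_mul' := fun x y => by cases x <;> cases y <;> simp [dihedralAutFun, mul_add, mul_sub] }
  map_one' := by ext x; cases x <;> simp [dihedralAutFun]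
  map_mul' u v := by ext x; cases x <;> simp [dihedralAutFun, mul_assoc]

/-- The homomorphism `ZMod q →* G` (written multiplicatively) sending `1` to a fixed
element `g` with `g ^ q = 1`. -/
def zmodPow {G : Type*} [Group G] (q : ℕ) [NeZero q] (g : G) (hg : g ^ q = 1) :
    Multiplicative (ZMod q) →* G where
  toFun x := g ^ (toAdd x).val
  map_one' := by
    show g ^ (toAdd (1 : Multiplicative (ZMod q))).val = 1
    rw [toAdd_one, ZMod.val_zero, pow_zero]
  map_mul' x y := by
    have key : ∀ m : ℕ, g ^ (m % q) = g ^ m := fun m => by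
      conv_rhs => rw [← Nat.div_add_mod m q]
      rw [pow_add, pow_mul, hg, one_pow, one_mul]
    show g ^ (toAdd (x * y)).val = g ^ (toAdd x).val * g ^ (toAdd y).val
    rw [toAdd_mul, ZMod.val_add, key, pow_add]

namespace Hyp

variable {p q i : ℕ}

/-- The action of `C_q` on `C_{pq}` sending the generator to multiplication by `i`. -/
def phiN (h : Hyp p q i) : Multiplicative (ZMod q) →* MulAut (Multiplicative (ZMod (p * q))) :=
  haveI : NeZero q := ⟨h.hq.ne_zero⟩
  zmodPow q (zmodMulAut (p * q) h.unit) (by rw [← map_pow, h.unit_pow, map_one])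

/-- The action of `C_q` on `D_{2pq}` sending the generator to `τ` (`τ(a) = a^i`, `τ(b) = b`). -/
def phiG (h : Hyp p q i) : Multiplicative (ZMod q) →* MulAut (DihedralGroup (p * q)) :=
  haveI : NeZero q := ⟨h.hq.ne_zero⟩
  zmodPow q (dihedralAut (p * q) h.unit) (by rw [← map_pow, h.unit_pow, map_one])

/-- The action of `C_q` on `C_p` sending the generator to multiplication by `i`. -/
def phiF (h : Hyp p q i) : Multiplicative (ZMod q) →* MulAut (Multiplicative (ZMod p)) :=
  haveI : NeZero q := ⟨h.hq.ne_zero⟩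
  zmodPow q (zmodMulAut p h.unitP) (by rw [← map_pow, h.unitP_pow, map_one])

end Hyp

/-- The group `N_{pq²} = ⟨a, c ∣ a^{pq} = c^q = 1, c a c⁻¹ = a^i⟩ = C_{pq} ⋊ C_q`. -/
abbrev Npq2 {p q i : ℕ} (h : Hyp p q i) : Type :=
  Multiplicative (ZMod (p * q)) ⋊[h.phiN] Multiplicative (ZMod q)

/-- The group `G_{p,q} = D_{2pq} ⋊_φ C_q`. -/
abbrev Gpq {p q i : ℕ} (h : Hyp p q i) : Type :=
  DihedralGroup (p * q) ⋊[h.phiG] Multiplicative (ZMod q)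

/-- The Frobenius group `F_{p,q} = C_p ⋊ C_q` (the nonabelian group of order `pq`). -/
abbrev Fpq {p q i : ℕ} (h : Hyp p q i) : Type :=
  Multiplicative (ZMod p) ⋊[h.phiF] Multiplicative (ZMod q)

variable {p q i : ℕ}

/-- The generator `a` of `N_{pq²}`. -/
def aN (h : Hyp p q i) : Npq2 h := SemidirectProduct.inl (ofAdd 1)

/-- The generator `c` of `N_{pq²}`. -/
def cN (h : Hyp p q i) : Npq2 h := SemidirectProduct.inr (ofAdd 1)

/-- The generator `a` of `G_{p,q}`. -/
def aG (h : Hyp p q i) : Gpq h := SemidirectProduct.inl (DihedralGroup.r 1)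

/-- The generator `b` of `G_{p,q}`. -/
def bG (h : Hyp p q i) : Gpq h := SemidirectProduct.inl (DihedralGroup.sr 0)

/-- The generator `c` of `G_{p,q}`. -/
def cG (h : Hyp p q i) : Gpq h := SemidirectProduct.inr (ofAdd 1)

/-- The real conjugacy class `(g)^± = (g) ∪ (g⁻¹)`. -/
def realClass {G : Type*} [Group G] (g : G) : Set G := {x | IsConj g x ∨ IsConj g⁻¹ x}

/-- `N` is a normal subgroup whose quotient is an `ℓ`-group (the quotient has `ℓ`-power order,
i.e. `N` has `ℓ`-power index). -/
def OQuot {G : Type*} [Group G] (ℓ : ℕ) (N : Subgroup G) : Prop :=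
  N.Normal ∧ ∃ k : ℕ, N.index = ℓ ^ k

/-- `H` is a large subgroup of `G`: it contains `O^ℓ(G)`, the smallest normal subgroup
with `ℓ`-group quotient, for some prime `ℓ`. -/
def IsLarge {G : Type*} [Group G] (H : Subgroup G) : Prop :=
  ∃ ℓ : ℕ, Nat.Prime ℓ ∧
    ∃ N : Subgroup G, OQuot ℓ N ∧ (∀ M : Subgroup G, OQuot ℓ M → N ≤ M) ∧ N ≤ H

section Reps

variable {k : Type*} [CommSemiring k] {G : Type*} [Group G]

/-- The subspace `V^H` of `H`-fixed vectors of a representation. -/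
def fixedPts {V : Type*} [AddCommMonoid V] [Module k V]
    (ρ : Representation k G V) (H : Subgroup G) : Submodule k V where
  carrier := {v | ∀ g ∈ H, ρ g v = v}
  add_mem' := by
    intro a b ha hb g hg
    rw [map_add, ha g hg, hb g hg]
  zero_mem' := by
    intro g hg
    rw [map_zero]
  smul_mem' := by
    intro c v hv g hg
    rw [map_smul, hv g hg]

end Reps

/-- The weak gap condition for a real representation: `dim V^P ≥ 2 dim V^H` for all
`P < H ≤ G` with `P` of prime power order. -/
def WeakGap {G : Type*} [Group G] {V : Type*} [AddCommGroup V] [Module ℝ V]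
    (ρ : Representation ℝ G V) : Prop :=
  ∀ P H : Subgroup G, P < H → (∃ ℓ k : ℕ, Nat.Prime ℓ ∧ Nat.card P = ℓ ^ k) →
    2 * Module.finrank ℝ (fixedPts ρ H) ≤ Module.finrank ℝ (fixedPts ρ P)

/-- Isomorphism of real representations: an equivariant linear equivalence. -/
def RepIso {G : Type*} [Group G] {U V : Type*} [AddCommGroup U] [Module ℝ U]
    [AddCommGroup V] [Module ℝ V]
    (ρU : Representation ℝ G U) (ρV : Representation ℝ G V) : Prop :=
  ∃ e : U ≃ₗ[ℝ] V, ∀ (g : G) (u : U), e (ρU g u) = ρV g (e u)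

/-- Two real representations are `𝒫`-matched if their restrictions to every subgroup of
prime power order are isomorphic. -/
def PMatched {G : Type*} [Group G] {U V : Type*} [AddCommGroup U] [Module ℝ U]
    [AddCommGroup V] [Module ℝ V]
    (ρU : Representation ℝ G U) (ρV : Representation ℝ G V) : Prop :=
  ∀ P : Subgroup G, (∃ ℓ k : ℕ, Nat.Prime ℓ ∧ Nat.card P = ℓ ^ k) →
    RepIso (ρU.comp P.subtype) (ρV.comp P.subtype)

/-- A bundled finite-dimensional-free real representation of `G`. -/
structure RealRep (G : Type*) [Group G] where
  carrier : Type
  [acg : AddCommGroup carrier]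
  [mod : Module ℝ carrier]
  rho : Representation ℝ G carrier

attribute [instance] RealRep.acg RealRep.mod

theorem dihedralAut_pow_r (n : ℕ) (u : (ZMod n)ˣ) (k : ℕ) (m : ZMod n) :
    ((dihedralAut n u) ^ k) (DihedralGroup.r m)
      = DihedralGroup.r (((u ^ k : (ZMod n)ˣ) : ZMod n) * m) := by
  induction k generalizing m with
  | zero => simp
  | succ k ih =>
    rw [pow_succ, MulAut.mul_apply]
    have h1 : (dihedralAut n u) (DihedralGroup.r m) = DihedralGroup.r ((u : ZMod n) * m) := rfl
    rw [h1, ih, pow_succ, Units.val_mul, mul_assoc]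

theorem Hyp.phiG_r (h : Hyp p q i) (z : Multiplicative (ZMod q)) (m : ZMod (p * q)) :
    h.phiG z (DihedralGroup.r m)
      = DihedralGroup.r (((h.unit ^ (toAdd z).val : (ZMod (p * q))ˣ) : ZMod (p * q)) * m) := by
  have h1 : h.phiG z = (dihedralAut (p * q) h.unit) ^ (toAdd z).val := rfl
  rw [h1, dihedralAut_pow_r]

theorem r_inv (n : ℕ) (m : ZMod n) : (DihedralGroup.r m)⁻¹ = DihedralGroup.r (-m) := rfl

/-- The subgroup `N_{pq²} = {(aˡ, cᵐ)}` of `G_{p,q}`. -/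
def NSub (h : Hyp p q i) : Subgroup (Gpq h) where
  carrier := {x | ∃ l : ZMod (p * q), x.left = DihedralGroup.r l}
  one_mem' := ⟨0, rfl⟩
  mul_mem' := by
    rintro x y ⟨lx, hx⟩ ⟨ly, hy⟩
    refine ⟨lx + (h.unit ^ (toAdd x.right).val : (ZMod (p * q))ˣ) * ly, ?_⟩
    rw [SemidirectProduct.mul_left, hx, hy, h.phiG_r, DihedralGroup.r_mul_r]
  inv_mem' := by
    rintro x ⟨lx, hx⟩
    refine ⟨-((h.unit ^ (toAdd x.right⁻¹).val : (ZMod (p * q))ˣ) * lx), ?_⟩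
    rw [SemidirectProduct.inv_left, hx, r_inv, h.phiG_r]
    congr 1
    ring

/-- The subgroup `N_{2pq} = {(bᵉaˡ, 1)} ≅ D_{2pq}` of `G_{p,q}`. -/
def N2pqSub (h : Hyp p q i) : Subgroup (Gpq h) :=
  MonoidHom.ker SemidirectProduct.rightHom

/-- The subgroup `N¹_{pq} = {(aˡ, 1)}` of `G_{p,q}`. -/
def NpqOneSub (h : Hyp p q i) : Subgroup (Gpq h) where
  carrier := {x | x.right = 1 ∧ ∃ l : ZMod (p * q), x.left = DihedralGroup.r l}
  one_mem' := ⟨rfl, 0, rfl⟩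
  mul_mem' := by
    rintro x y ⟨hx1, lx, hx⟩ ⟨hy1, ly, hy⟩
    refine ⟨by rw [SemidirectProduct.mul_right, hx1, hy1, mul_one],
      lx + (h.unit ^ (toAdd x.right).val : (ZMod (p * q))ˣ) * ly, ?_⟩
    rw [SemidirectProduct.mul_left, hx, hy, h.phiG_r, DihedralGroup.r_mul_r]
  inv_mem' := by
    rintro x ⟨hx1, lx, hx⟩
    refine ⟨by rw [SemidirectProduct.inv_right, hx1, inv_one],
      -((h.unit ^ (toAdd x.right⁻¹).val : (ZMod (p * q))ˣ) * lx), ?_⟩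
    rw [SemidirectProduct.inv_left, hx, r_inv, h.phiG_r]
    congr 1
    ring

/-- The subgroup `N²_{pq} = {(a^{qs}, cᵐ)}` of `G_{p,q}`. -/
def NpqTwoSub (h : Hyp p q i) : Subgroup (Gpq h) where
  carrier := {x | ∃ s : ZMod (p * q), x.left = DihedralGroup.r ((q : ZMod (p * q)) * s)}
  one_mem' := ⟨0, by rw [mul_zero] <;> rfl⟩
  mul_mem' := by
    rintro x y ⟨sx, hx⟩ ⟨sy, hy⟩
    refine ⟨sx + (h.unit ^ (toAdd x.right).val : (ZMod (p * q))ˣ) * sy, ?_⟩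
    rw [SemidirectProduct.mul_left, hx, hy, h.phiG_r, DihedralGroup.r_mul_r]
    congr 1
    ring
  inv_mem' := by
    rintro x ⟨sx, hx⟩
    refine ⟨-((h.unit ^ (toAdd x.right⁻¹).val : (ZMod (p * q))ˣ) * sx), ?_⟩
    rw [SemidirectProduct.inv_left, hx, r_inv, h.phiG_r]
    congr 1
    ring

/-- The subgroup `N_p = {(a^{qs}, 1)}` of `G_{p,q}`. -/
def NpSub (h : Hyp p q i) : Subgroup (Gpq h) where
  carrier := {x | x.right = 1 ∧ ∃ s : ZMod (p * q), x.left = DihedralGroup.r ((q : ZMod (p * q)) * s)}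
  one_mem' := ⟨rfl, 0, by rw [mul_zero] <;> rfl⟩
  mul_mem' := by
    rintro x y ⟨hx1, sx, hx⟩ ⟨hy1, sy, hy⟩
    refine ⟨by rw [SemidirectProduct.mul_right, hx1, hy1, mul_one],
      sx + (h.unit ^ (toAdd x.right).val : (ZMod (p * q))ˣ) * sy, ?_⟩
    rw [SemidirectProduct.mul_left, hx, hy, h.phiG_r, DihedralGroup.r_mul_r]
    congr 1
    ring
  inv_mem' := by
    rintro x ⟨hx1, sx, hx⟩
    refine ⟨by rw [SemidirectProduct.inv_right, hx1, inv_one],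
      -((h.unit ^ (toAdd x.right⁻¹).val : (ZMod (p * q))ˣ) * sx), ?_⟩
    rw [SemidirectProduct.inv_left, hx, r_inv, h.phiG_r]
    congr 1
    ring

/-- The subgroup `N_q = {(a^{ps}, 1)}` of `G_{p,q}`. -/
def NqSub (h : Hyp p q i) : Subgroup (Gpq h) where
  carrier := {x | x.right = 1 ∧ ∃ s : ZMod (p * q), x.left = DihedralGroup.r ((p : ZMod (p * q)) * s)}
  one_mem' := ⟨rfl, 0, by rw [mul_zero] <;> rfl⟩
  mul_mem' := by
    rintro x y ⟨hx1, sx, hx⟩ ⟨hy1, sy, hy⟩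
    refine ⟨by rw [SemidirectProduct.mul_right, hx1, hy1, mul_one],
      sx + (h.unit ^ (toAdd x.right).val : (ZMod (p * q))ˣ) * sy, ?_⟩
    rw [SemidirectProduct.mul_left, hx, hy, h.phiG_r, DihedralGroup.r_mul_r]
    congr 1
    ring
  inv_mem' := by
    rintro x ⟨hx1, sx, hx⟩
    refine ⟨by rw [SemidirectProduct.inv_right, hx1, inv_one],
      -((h.unit ^ (toAdd x.right⁻¹).val : (ZMod (p * q))ˣ) * sx), ?_⟩
    rw [SemidirectProduct.inv_left, hx, r_inv, h.phiG_r]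
    congr 1
    ring

section Aux

open Multiplicative DihedralGroup SemidirectProduct

theorem sr_inv' (n : ℕ) (m : ZMod n) : (DihedralGroup.sr m)⁻¹ = DihedralGroup.sr m := rfl

def rHom (n : ℕ) : Multiplicative (ZMod n) →* DihedralGroup n where
  toFun x := .r x.toAdd
  map_one' := rfl
  map_mul' x y := by
    show DihedralGroup.r (toAdd (x * y)) = DihedralGroup.r (toAdd x) * DihedralGroup.r (toAdd y)
    rw [DihedralGroup.r_mul_r]
    rfl

theorem dihedralAut_pow_sr (n : ℕ) (u : (ZMod n)ˣ) (k : ℕ) (m : ZMod n) :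
    ((dihedralAut n u) ^ k) (DihedralGroup.sr m)
      = DihedralGroup.sr (((u ^ k : (ZMod n)ˣ) : ZMod n) * m) := by
  induction k generalizing m with
  | zero => simp
  | succ k ih =>
    rw [pow_succ, MulAut.mul_apply]
    have h1 : (dihedralAut n u) (DihedralGroup.sr m) = DihedralGroup.sr ((u : ZMod n) * m) := rfl
    rw [h1, ih, pow_succ, Units.val_mul, mul_assoc]

theorem zmodMulAut_pow (n : ℕ) (u : (ZMod n)ˣ) (k : ℕ) (x : Multiplicative (ZMod n)) :
    ((zmodMulAut n u) ^ k) x = ofAdd (((u ^ k : (ZMod n)ˣ) : ZMod n) * x.toAdd) := by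
  induction k generalizing x with
  | zero => simp
  | succ k ih =>
    rw [pow_succ, MulAut.mul_apply]
    have h1 : (zmodMulAut n u) x = ofAdd ((u : ZMod n) * x.toAdd) := rfl
    rw [h1, ih]
    congr 1
    simp [pow_succ, Units.val_mul]
    ring

variable {p q i : ℕ}

theorem Hyp.unit_pow_coe (h : Hyp p q i) (k : ℕ) :
    ((h.unit ^ k : (ZMod (p * q))ˣ) : ZMod (p * q)) = (i : ZMod (p * q)) ^ k := by
  rw [Units.val_pow_eq_pow_val]
  rfl

theorem Hyp.unitP_pow_coe (h : Hyp p q i) (k : ℕ) :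
    ((h.unitP ^ k : (ZMod p)ˣ) : ZMod p) = (i : ZMod p) ^ k := by
  rw [Units.val_pow_eq_pow_val]
  rfl

theorem Hyp.phiG_r' (h : Hyp p q i) (z : Multiplicative (ZMod q)) (m : ZMod (p * q)) :
    h.phiG z (DihedralGroup.r m) = DihedralGroup.r ((i : ZMod (p * q)) ^ (toAdd z).val * m) := by
  rw [h.phiG_r, h.unit_pow_coe]

theorem Hyp.phiG_sr' (h : Hyp p q i) (z : Multiplicative (ZMod q)) (m : ZMod (p * q)) :
    h.phiG z (DihedralGroup.sr m) = DihedralGroup.sr ((i : ZMod (p * q)) ^ (toAdd z).val * m) := by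
  have h1 : h.phiG z = (dihedralAut (p * q) h.unit) ^ (toAdd z).val := rfl
  rw [h1, dihedralAut_pow_sr, h.unit_pow_coe]

theorem Hyp.phiF_apply (h : Hyp p q i) (z : Multiplicative (ZMod q)) (x : Multiplicative (ZMod p)) :
    h.phiF z x = ofAdd ((i : ZMod p) ^ (toAdd z).val * toAdd x) := by
  have h1 : h.phiF z = (zmodMulAut p h.unitP) ^ (toAdd z).val := rfl
  rw [h1, zmodMulAut_pow, h.unitP_pow_coe]

variable (h : Hyp p q i)

theorem mk_mul (x x' : DihedralGroup (p * q)) (z z' : Multiplicative (ZMod q)) :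
    (⟨x, z⟩ * ⟨x', z'⟩ : Gpq h) = ⟨x * h.phiG z x', z * z'⟩ := rfl

theorem mk_inv (x : DihedralGroup (p * q)) (z : Multiplicative (ZMod q)) :
    (⟨x, z⟩ : Gpq h)⁻¹ = ⟨h.phiG z⁻¹ x⁻¹, z⁻¹⟩ := rfl

theorem conj_mk (y x : DihedralGroup (p * q)) (w z : Multiplicative (ZMod q)) :
    (⟨y, w⟩ : Gpq h) * ⟨x, z⟩ * (⟨y, w⟩ : Gpq h)⁻¹ = ⟨y * h.phiG w x * h.phiG z y⁻¹, z⟩ := by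
  have hc : w * z * w⁻¹ = z := mul_inv_cancel_comm w z
  ext
  · show (y * h.phiG w x) * h.phiG (w * z) (h.phiG w⁻¹ y⁻¹) = y * h.phiG w x * h.phiG z y⁻¹
    rw [← MulAut.mul_apply, ← map_mul, hc]
  · show w * z * w⁻¹ = z
    exact hc

theorem ratio_mk (x x' : DihedralGroup (p * q)) (z : Multiplicative (ZMod q)) :
    (⟨x', z⟩ : Gpq h) * (⟨x, z⟩ : Gpq h)⁻¹ = ⟨x' * x⁻¹, 1⟩ := by
  ext
  · show x' * h.phiG z (h.phiG z⁻¹ x⁻¹) = x' * x⁻¹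
    rw [← MulAut.mul_apply, ← map_mul, mul_inv_cancel, map_one]
    rfl
  · exact mul_inv_cancel z

theorem mem_NSub {x : Gpq h} : x ∈ NSub h ↔ ∃ l, x.left = DihedralGroup.r l := Iff.rfl

theorem mem_NpqTwoSub {x : Gpq h} :
    x ∈ NpqTwoSub h ↔ ∃ s, x.left = DihedralGroup.r ((q : ZMod (p * q)) * s) := Iff.rfl

theorem mem_NpqOneSub {x : Gpq h} :
    x ∈ NpqOneSub h ↔ x.right = 1 ∧ ∃ l, x.left = DihedralGroup.r l := Iff.rfl

theorem mem_NpSub {x : Gpq h} :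
    x ∈ NpSub h ↔ x.right = 1 ∧ ∃ s, x.left = DihedralGroup.r ((q : ZMod (p * q)) * s) := Iff.rfl

theorem mem_NqSub {x : Gpq h} :
    x ∈ NqSub h ↔ x.right = 1 ∧ ∃ s, x.left = DihedralGroup.r ((p : ZMod (p * q)) * s) := Iff.rfl

theorem mem_N2pqSub {x : Gpq h} : x ∈ N2pqSub h ↔ x.right = 1 := Iff.rfl

end Aux
section NumAux

open Multiplicative

theorem bezout_zmod (n : ℕ) (a d : ℤ) (hd : (Int.gcd a n : ℤ) ∣ d) :
    ∃ t : ℤ, (t : ZMod n) * (a : ZMod n) = (d : ZMod n) := by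
  obtain ⟨c, hc⟩ := hd
  refine ⟨c * Int.gcdA a n, ?_⟩
  have h3 := congrArg (fun z : ℤ => ((z : ZMod n))) (Int.gcd_eq_gcd_ab a n)
  push_cast [ZMod.natCast_self] at h3
  rw [hc]
  push_cast
  rw [h3]
  ring

variable {p q i : ℕ}

namespace Hyp

theorem q_dvd_int (h : Hyp p q i) (m : ℕ) : (q : ℤ) ∣ 1 - (i : ℤ) ^ m := by
  have h1 : (i : ZMod q) = 1 := by
    have := (ZMod.natCast_eq_natCast_iff i 1 q).mpr h.hmod
    simpa using this
  have h2 : ((1 - (i : ℤ) ^ m : ℤ) : ZMod q) = 0 := by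
    push_cast
    rw [h1]
    ring
  exact (ZMod.intCast_zmod_eq_zero_iff_dvd _ q).mp h2

theorem p_ne_q (h : Hyp p q i) : p ≠ q := by
  have h1 : 0 < p - 1 := by have := h.hp.two_le; omega
  have := Nat.le_of_dvd h1 h.hdvd
  omega

theorem p_not_dvd_int (h : Hyp p q i) {m : ℕ} (hm : ¬ q ∣ m) : ¬ (p : ℤ) ∣ 1 - (i : ℤ) ^ m := by
  intro hd
  have h2 : ((1 - (i : ℤ) ^ m : ℤ) : ZMod p) = 0 := (ZMod.intCast_zmod_eq_zero_iff_dvd _ p).mpr hd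
  push_cast at h2
  have h3 : (i : ZMod p) ^ m = 1 := by linear_combination -h2
  exact hm (h.hord ▸ orderOf_dvd_of_pow_eq_one h3)

/-- Bezout certificate producing `q` from `1 - i^m` mod `pq`, for `q ∤ m`. -/
theorem one_sub_bezout (h : Hyp p q i) {m : ℕ} (hm : ¬ q ∣ m) :
    ∃ t : ℤ, (t : ZMod (p * q)) * (1 - (i : ZMod (p * q)) ^ m) = (q : ZMod (p * q)) := by
  set a : ℤ := 1 - (i : ℤ) ^ m with ha
  have hg : Int.gcd a ((p * q : ℕ) : ℤ) = q := by
    have h1 : (q : ℤ) ∣ (Int.gcd a ((p * q : ℕ) : ℤ) : ℤ) :=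
      Int.dvd_coe_gcd (h.q_dvd_int m) (by exact_mod_cast Dvd.intro_left p rfl)
    have h2 : Int.gcd a ((p * q : ℕ) : ℤ) ∣ p * q := by
      have h2' : ((Int.gcd a ((p * q : ℕ) : ℤ) : ℕ) : ℤ) ∣ ((p * q : ℕ) : ℤ) := Int.gcd_dvd_right _ _
      exact_mod_cast h2'
    have h3 : ¬ p ∣ Int.gcd a ((p * q : ℕ) : ℤ) := by
      intro hd
      exact h.p_not_dvd_int hm (dvd_trans (Int.natCast_dvd_natCast.mpr hd) (Int.gcd_dvd_left _ _))
    have h4 : Nat.Coprime (Int.gcd a ((p * q : ℕ) : ℤ)) p :=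
      ((Nat.Prime.coprime_iff_not_dvd h.hp).mpr h3).symm
    have h5 : Int.gcd a ((p * q : ℕ) : ℤ) ∣ q := h4.dvd_of_dvd_mul_left h2
    exact Nat.dvd_antisymm h5 (by exact_mod_cast h1)
  obtain ⟨t, ht⟩ := bezout_zmod (p * q) a q (by rw [hg])
  refine ⟨t, ?_⟩
  have hca : ((a : ℤ) : ZMod (p * q)) = 1 - (i : ZMod (p * q)) ^ m := by
    rw [ha]; push_cast; ring
  rw [← hca, ht]
  push_cast
  rfl

theorem two_ne_zero_q (h : Hyp p q i) : (2 : ZMod q) ≠ 0 := by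
  intro h2
  have hd : q ∣ 2 := by
    have h4 : ((2 : ℕ) : ZMod q) = 0 := by exact_mod_cast h2
    exact (ZMod.natCast_eq_zero_iff 2 q).mp h4
  have h2le := h.hq.two_le
  have := Nat.le_of_dvd (by norm_num) hd
  rcases h.hoddq with ⟨k, hk⟩
  omega

/-- Bezout certificate producing `1` from `1 + i^m` mod `pq`. -/
theorem one_add_bezout (h : Hyp p q i) (m : ℕ) :
    ∃ t : ℤ, (t : ZMod (p * q)) * (1 + (i : ZMod (p * q)) ^ m) = 1 := by
  set a : ℤ := 1 + (i : ℤ) ^ m with ha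
  have hpodd : p ≠ 2 := by rcases h.hoddp with ⟨k, hk⟩; omega
  have hqodd : q ≠ 2 := by rcases h.hoddq with ⟨k, hk⟩; omega
  have hp : ¬ (p : ℤ) ∣ a := by
    intro hd
    have h2 : ((a : ℤ) : ZMod p) = 0 := (ZMod.intCast_zmod_eq_zero_iff_dvd _ p).mpr hd
    rw [ha] at h2; push_cast at h2
    have h3 : (i : ZMod p) ^ m = -1 := by linear_combination h2
    have h4 : (i : ZMod p) ^ (2 * m) = 1 := by
      rw [two_mul, pow_add, h3]; ring
    have h5 : q ∣ 2 * m := h.hord ▸ orderOf_dvd_of_pow_eq_one h4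
    have hq2 : ¬ q ∣ 2 := fun hdd => by
      have h2le := h.hq.two_le
      have := Nat.le_of_dvd (by norm_num) hdd
      omega
    have h6 : q ∣ m := Nat.Coprime.dvd_of_dvd_mul_left
      ((Nat.Prime.coprime_iff_not_dvd h.hq).mpr hq2) h5
    have h7 : (i : ZMod p) ^ m = 1 := by
      obtain ⟨c, hc⟩ := h6
      rw [hc, pow_mul, ← h.hord, pow_orderOf_eq_one, one_pow]
    rw [h7] at h3
    have h8 : ((2 : ℕ) : ZMod p) = 0 := by push_cast; linear_combination h3
    have h9 : p ∣ 2 := (ZMod.natCast_eq_zero_iff 2 p).mp h8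
    have := h.hp.two_le
    have := Nat.le_of_dvd (by norm_num) h9
    omega
  have hq : ¬ (q : ℤ) ∣ a := by
    intro hd
    have h2 : ((a : ℤ) : ZMod q) = 0 := (ZMod.intCast_zmod_eq_zero_iff_dvd _ q).mpr hd
    rw [ha] at h2; push_cast at h2
    have h1 : (i : ZMod q) = 1 := by
      have := (ZMod.natCast_eq_natCast_iff i 1 q).mpr h.hmod
      simpa using this
    rw [h1, one_pow] at h2
    exact h.two_ne_zero_q (by linear_combination h2)
  have hg : Int.gcd a ((p * q : ℕ) : ℤ) = 1 := by
    have h2 : Int.gcd a ((p * q : ℕ) : ℤ) ∣ p * q := by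
      have h2' : ((Int.gcd a ((p * q : ℕ) : ℤ) : ℕ) : ℤ) ∣ ((p * q : ℕ) : ℤ) := Int.gcd_dvd_right _ _
      exact_mod_cast h2'
    have h3 : ¬ p ∣ Int.gcd a ((p * q : ℕ) : ℤ) := fun hd =>
      hp (dvd_trans (Int.natCast_dvd_natCast.mpr hd) (Int.gcd_dvd_left _ _))
    have h3' : ¬ q ∣ Int.gcd a ((p * q : ℕ) : ℤ) := fun hd =>
      hq (dvd_trans (Int.natCast_dvd_natCast.mpr hd) (Int.gcd_dvd_left _ _))
    have h4 : Nat.Coprime (Int.gcd a ((p * q : ℕ) : ℤ)) (p * q) :=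
      Nat.Coprime.mul_right ((h.hp.coprime_iff_not_dvd.mpr h3).symm)
        ((h.hq.coprime_iff_not_dvd.mpr h3').symm)
    exact h4.eq_one_of_dvd h2
  obtain ⟨t, ht⟩ := bezout_zmod (p * q) a 1 (by rw [hg]; exact one_dvd _)
  refine ⟨t, ?_⟩
  have hca : ((a : ℤ) : ZMod (p * q)) = 1 + (i : ZMod (p * q)) ^ m := by
    rw [ha]; push_cast; ring
  rw [← hca, ht]
  push_cast
  rfl

/-- `1 - i^m` is a multiple of `q` in `ZMod (p*q)`. -/
theorem one_sub_q_mul (h : Hyp p q i) (m : ℕ) :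
    ∃ t : ZMod (p * q), 1 - (i : ZMod (p * q)) ^ m = (q : ZMod (p * q)) * t := by
  obtain ⟨c, hc⟩ := h.q_dvd_int m
  refine ⟨((c : ℤ) : ZMod (p * q)), ?_⟩
  have h5 : ((1 - (i : ℤ) ^ m : ℤ) : ZMod (p * q)) = (((q : ℤ) * c : ℤ) : ZMod (p * q)) := by
    rw [hc]
  push_cast at h5
  exact h5

end Hyp

end NumAux
section CastAux

open Multiplicative

variable {p q i : ℕ}

/-- Reduction mod `q`. -/
def cQ (p q : ℕ) : ZMod (p * q) →+* ZMod q := ZMod.castHom (dvd_mul_left q p) (ZMod q)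

/-- Reduction mod `p`. -/
def cP (p q : ℕ) : ZMod (p * q) →+* ZMod p := ZMod.castHom (dvd_mul_right p q) (ZMod p)

theorem val_cast_self (n : ℕ) [NeZero n] (l : ZMod n) : ((l.val : ℕ) : ZMod n) = l := by
  rw [ZMod.natCast_val, ZMod.cast_id]

namespace Hyp

theorem cQ_zero_iff (h : Hyp p q i) (l : ZMod (p * q)) :
    cQ p q l = 0 ↔ ∃ s : ZMod (p * q), l = (q : ZMod (p * q)) * s := by
  haveI : NeZero q := ⟨h.hq.ne_zero⟩
  haveI : NeZero (p * q) := ⟨Nat.mul_ne_zero h.hp.ne_zero h.hq.ne_zero⟩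
  constructor
  · intro h0
    have h1 : ((l.val : ℕ) : ZMod q) = 0 := by
      rw [← h0, cQ, ZMod.castHom_apply, ZMod.natCast_val]
    obtain ⟨c, hc⟩ := (ZMod.natCast_eq_zero_iff l.val q).mp h1
    refine ⟨(c : ZMod (p * q)), ?_⟩
    rw [← val_cast_self (p * q) l, hc]
    push_cast
    ring
  · rintro ⟨s, rfl⟩
    rw [map_mul, map_natCast, ZMod.natCast_self, zero_mul]

theorem cP_zero_iff (h : Hyp p q i) (l : ZMod (p * q)) :
    cP p q l = 0 ↔ ∃ s : ZMod (p * q), l = (p : ZMod (p * q)) * s := by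
  haveI : NeZero p := ⟨h.hp.ne_zero⟩
  haveI : NeZero (p * q) := ⟨Nat.mul_ne_zero h.hp.ne_zero h.hq.ne_zero⟩
  constructor
  · intro h0
    have h1 : ((l.val : ℕ) : ZMod p) = 0 := by
      rw [← h0, cP, ZMod.castHom_apply, ZMod.natCast_val]
    obtain ⟨c, hc⟩ := (ZMod.natCast_eq_zero_iff l.val p).mp h1
    refine ⟨(c : ZMod (p * q)), ?_⟩
    rw [← val_cast_self (p * q) l, hc]
    push_cast
    ring
  · rintro ⟨s, rfl⟩
    rw [map_mul, map_natCast, ZMod.natCast_self, zero_mul]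

theorem crt_inj (h : Hyp p q i) {l : ZMod (p * q)} (hP : cP p q l = 0) (hQ : cQ p q l = 0) :
    l = 0 := by
  haveI : NeZero p := ⟨h.hp.ne_zero⟩
  haveI : NeZero q := ⟨h.hq.ne_zero⟩
  haveI : NeZero (p * q) := ⟨Nat.mul_ne_zero h.hp.ne_zero h.hq.ne_zero⟩
  have h1 : ((l.val : ℕ) : ZMod p) = 0 := by
    rw [← hP, cP, ZMod.castHom_apply, ZMod.natCast_val]
  have h2 : ((l.val : ℕ) : ZMod q) = 0 := by
    rw [← hQ, cQ, ZMod.castHom_apply, ZMod.natCast_val]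
  have hp : p ∣ l.val := (ZMod.natCast_eq_zero_iff l.val p).mp h1
  have hq : q ∣ l.val := (ZMod.natCast_eq_zero_iff l.val q).mp h2
  have hco : Nat.Coprime p q := (Nat.coprime_primes h.hp h.hq).mpr h.p_ne_q
  have hpq : p * q ∣ l.val := Nat.Coprime.mul_dvd_of_dvd_of_dvd hco hp hq
  have := ZMod.val_lt l
  have hval : l.val = 0 := by
    rcases hpq with ⟨c, hc⟩
    rcases Nat.eq_zero_or_pos c with h0 | h0
    · rw [h0, mul_zero] at hc; exact hc
    · nlinarith
  exact (ZMod.val_eq_zero l).mp hval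

theorem cQ_natCast (h : Hyp p q i) (m : ℕ) : cQ p q (m : ZMod (p * q)) = (m : ZMod q) :=
  map_natCast _ m

end Hyp

end CastAux

section GenAux

open Multiplicative DihedralGroup

variable {p q i : ℕ}

namespace Hyp

theorem zpow_rot (h : Hyp p q i) (c : ZMod (p * q)) (t : ℤ) :
    (⟨DihedralGroup.r c, 1⟩ : Gpq h) ^ t = ⟨DihedralGroup.r ((t : ZMod (p * q)) * c), 1⟩ := by
  have e1 : (⟨DihedralGroup.r c, (1 : Multiplicative (ZMod q))⟩ : Gpq h)
      = (SemidirectProduct.inl.comp (rHom (p * q))) (ofAdd c) := rfl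
  have e2 : (⟨DihedralGroup.r ((t : ZMod (p * q)) * c), (1 : Multiplicative (ZMod q))⟩ : Gpq h)
      = (SemidirectProduct.inl.comp (rHom (p * q))) (ofAdd ((t : ZMod (p * q)) * c)) := rfl
  rw [e1, e2, ← map_zpow]
  congr 1
  have h1 : toAdd ((ofAdd c) ^ t) = (t : ZMod (p * q)) * c := by
    rw [toAdd_zpow, toAdd_ofAdd, zsmul_eq_mul]
  rw [← ofAdd_toAdd ((ofAdd c) ^ t), h1]

theorem zpow_rot_mem (h : Hyp p q i) {N : Subgroup (Gpq h)} {c : ZMod (p * q)}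
    (hc : (⟨DihedralGroup.r c, 1⟩ : Gpq h) ∈ N) (t : ℤ) :
    (⟨DihedralGroup.r ((t : ZMod (p * q)) * c), 1⟩ : Gpq h) ∈ N := by
  rw [← h.zpow_rot]
  exact N.zpow_mem hc t

theorem rot_mul_mk (h : Hyp p q i) (a : ZMod (p * q)) (x : DihedralGroup (p * q))
    (w : Multiplicative (ZMod q)) :
    (⟨DihedralGroup.r a, 1⟩ : Gpq h) * ⟨x, w⟩ = ⟨DihedralGroup.r a * x, w⟩ := by
  rw [mk_mul]
  simp

theorem mk_split (h : Hyp p q i) (x : DihedralGroup (p * q)) (w : Multiplicative (ZMod q)) :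
    (⟨x, w⟩ : Gpq h) = (⟨x, 1⟩ : Gpq h) * ⟨1, w⟩ := by
  rw [mk_mul]
  simp

/-- From `(r l, z) ∈ N`, `N` normal, we get `(r (1 - i^z), 1) ∈ N`. -/
theorem rot_gen (h : Hyp p q i) {N : Subgroup (Gpq h)} (hN : N.Normal)
    {l : ZMod (p * q)} {z : Multiplicative (ZMod q)} (hx : (⟨DihedralGroup.r l, z⟩ : Gpq h) ∈ N) :
    (⟨DihedralGroup.r (1 - (i : ZMod (p * q)) ^ (toAdd z).val), 1⟩ : Gpq h) ∈ N := by
  have h1 := hN.conj_mem _ hx (⟨DihedralGroup.r 1, 1⟩ : Gpq h)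
  rw [conj_mk] at h1
  have h2 := N.mul_mem h1 (N.inv_mem hx)
  rw [ratio_mk] at h2
  convert h2 using 2
  rw [map_one]
  simp only [MulAut.one_apply, r_inv, h.phiG_r', DihedralGroup.r_mul_r]
  congr 1
  ring

/-- From `(sr k, z) ∈ N`, `N` normal, we get `(r (1 + i^z), 1) ∈ N`. -/
theorem sr_gen (h : Hyp p q i) {N : Subgroup (Gpq h)} (hN : N.Normal)
    {k : ZMod (p * q)} {z : Multiplicative (ZMod q)} (hx : (⟨DihedralGroup.sr k, z⟩ : Gpq h) ∈ N) :
    (⟨DihedralGroup.r (1 + (i : ZMod (p * q)) ^ (toAdd z).val), 1⟩ : Gpq h) ∈ N := by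
  have h1 := hN.conj_mem _ hx (⟨DihedralGroup.r 1, 1⟩ : Gpq h)
  rw [conj_mk] at h1
  have h2 := N.mul_mem h1 (N.inv_mem hx)
  rw [ratio_mk] at h2
  convert h2 using 2
  rw [map_one]
  simp only [MulAut.one_apply, r_inv, sr_inv' (p * q), h.phiG_r', DihedralGroup.r_mul_sr,
    DihedralGroup.sr_mul_r, DihedralGroup.sr_mul_sr]
  congr 1
  ring

/-- From `(r l, z) ∈ N`, `N` normal, we get `(r (-(2l)), 1) ∈ N` (conjugation by `b`). -/
theorem conj_b_gen (h : Hyp p q i) {N : Subgroup (Gpq h)} (hN : N.Normal)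
    {l : ZMod (p * q)} {z : Multiplicative (ZMod q)} (hx : (⟨DihedralGroup.r l, z⟩ : Gpq h) ∈ N) :
    (⟨DihedralGroup.r (-(2 * l)), 1⟩ : Gpq h) ∈ N := by
  have h1 := hN.conj_mem _ hx (⟨DihedralGroup.sr 0, 1⟩ : Gpq h)
  rw [conj_mk] at h1
  have h2 := N.mul_mem h1 (N.inv_mem hx)
  rw [ratio_mk] at h2
  convert h2 using 2
  rw [map_one]
  simp only [MulAut.one_apply, r_inv, sr_inv' (p * q), h.phiG_sr', DihedralGroup.r_mul_sr,
    DihedralGroup.sr_mul_r, DihedralGroup.sr_mul_sr, mul_zero]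
  congr 1
  ring

/-- From `(1, z) ∈ N`, `z ≠ 1`, we get `(1, w) ∈ N` for all `w`. -/
theorem inr_gen (h : Hyp p q i) {N : Subgroup (Gpq h)}
    {z : Multiplicative (ZMod q)} (hz : (⟨1, z⟩ : Gpq h) ∈ N) (hz1 : z ≠ 1)
    (w : Multiplicative (ZMod q)) : (⟨1, w⟩ : Gpq h) ∈ N := by
  haveI := Fact.mk h.hq
  have hζ : toAdd z ≠ 0 := by
    intro h0
    apply hz1
    rw [← ofAdd_toAdd z, h0, ofAdd_zero]
  set t := (toAdd w * (toAdd z)⁻¹).val with htdef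
  have key : z ^ t = w := by
    have h1 : toAdd (z ^ t) = (t : ZMod q) * toAdd z := by
      rw [toAdd_pow, nsmul_eq_mul]
    have h2 : ((t : ℕ) : ZMod q) = toAdd w * (toAdd z)⁻¹ := by
      rw [htdef, ZMod.natCast_val, ZMod.cast_id]
    have h3 : toAdd (z ^ t) = toAdd w := by
      rw [h1, h2, inv_mul_cancel_right₀ hζ]
    rw [← ofAdd_toAdd (z ^ t), h3, ofAdd_toAdd]
  have h4 := N.pow_mem hz t
  rw [show (⟨(1 : DihedralGroup (p * q)), z⟩ : Gpq h) = SemidirectProduct.inr z from rfl,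
    ← map_pow, key] at h4
  exact h4

end Hyp

end GenAux
section Forward

open Multiplicative DihedralGroup

variable {p q i : ℕ}

namespace Hyp

theorem q_cast_ne_zero (h : Hyp p q i) : (q : ZMod (p * q)) ≠ 0 := by
  intro h0
  have hd : p * q ∣ q := (ZMod.natCast_eq_zero_iff q (p * q)).mp h0
  have h2 := h.hp.two_le
  have h3 := h.hq.two_le
  have := Nat.le_of_dvd (by omega) hd
  nlinarith

theorem p_cast_ne_zero (h : Hyp p q i) : (p : ZMod (p * q)) ≠ 0 := by
  intro h0
  have hd : p * q ∣ p := (ZMod.natCast_eq_zero_iff p (p * q)).mp h0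
  have h2 := h.hp.two_le
  have h3 := h.hq.two_le
  have := Nat.le_of_dvd (by omega) hd
  nlinarith

theorem one_cast_ne_zero (h : Hyp p q i) : (1 : ZMod (p * q)) ≠ 0 := by
  haveI : Fact (1 < p * q) := ⟨by nlinarith [h.hp.two_le, h.hq.two_le]⟩
  exact one_ne_zero

theorem mk_rot_ne_one (h : Hyp p q i) {a : ZMod (p * q)} (ha : a ≠ 0) :
    (⟨DihedralGroup.r a, 1⟩ : Gpq h) ≠ 1 := by
  intro he
  have h1 := congrArg SemidirectProduct.left he
  simp only [SemidirectProduct.one_left] at h1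
  rw [DihedralGroup.one_def] at h1
  exact ha (by injection h1)

theorem normal_NSub (h : Hyp p q i) : (NSub h).Normal := by
  constructor
  intro x hx g
  obtain ⟨xl, xr⟩ := x
  obtain ⟨gl, gr⟩ := g
  obtain ⟨l, hl⟩ := hx
  simp only at hl
  subst hl
  rw [conj_mk]
  cases gl with
  | r k =>
    refine ⟨k + (i : ZMod (p * q)) ^ (toAdd gr).val * l - (i : ZMod (p * q)) ^ (toAdd xr).val * k, ?_⟩
    show DihedralGroup.r k * h.phiG gr (.r l) * h.phiG xr (.r k)⁻¹ = _
    rw [r_inv, h.phiG_r', h.phiG_r', DihedralGroup.r_mul_r, DihedralGroup.r_mul_r]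
    congr 1
    ring
  | sr k =>
    refine ⟨(i : ZMod (p * q)) ^ (toAdd xr).val * k - k - (i : ZMod (p * q)) ^ (toAdd gr).val * l, ?_⟩
    show DihedralGroup.sr k * h.phiG gr (.r l) * h.phiG xr (.sr k)⁻¹ = _
    rw [sr_inv', h.phiG_r', h.phiG_sr', DihedralGroup.sr_mul_r, DihedralGroup.sr_mul_sr]
    congr 1
    ring

theorem normal_NpqTwoSub (h : Hyp p q i) : (NpqTwoSub h).Normal := by
  constructor
  intro x hx g
  obtain ⟨xl, xr⟩ := x
  obtain ⟨gl, gr⟩ := g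
  obtain ⟨s, hl⟩ := hx
  simp only at hl
  subst hl
  rw [conj_mk]
  obtain ⟨t, ht⟩ := h.one_sub_q_mul (toAdd xr).val
  cases gl with
  | r k =>
    refine ⟨t * k + (i : ZMod (p * q)) ^ (toAdd gr).val * s, ?_⟩
    show DihedralGroup.r k * h.phiG gr (.r _) * h.phiG xr (.r k)⁻¹ = _
    rw [r_inv, h.phiG_r', h.phiG_r', DihedralGroup.r_mul_r, DihedralGroup.r_mul_r]
    congr 1
    have : k - (i : ZMod (p * q)) ^ (toAdd xr).val * k = (q : ZMod (p * q)) * (t * k) := by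
      have := congrArg (· * k) ht
      calc k - (i : ZMod (p * q)) ^ (toAdd xr).val * k
          = (1 - (i : ZMod (p * q)) ^ (toAdd xr).val) * k := by ring
        _ = (q : ZMod (p * q)) * t * k := by rw [ht]
        _ = (q : ZMod (p * q)) * (t * k) := by ring
    linear_combination this
  | sr k =>
    refine ⟨-(t * k) - (i : ZMod (p * q)) ^ (toAdd gr).val * s, ?_⟩
    show DihedralGroup.sr k * h.phiG gr (.r _) * h.phiG xr (.sr k)⁻¹ = _
    rw [sr_inv', h.phiG_r', h.phiG_sr', DihedralGroup.sr_mul_r, DihedralGroup.sr_mul_sr]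
    congr 1
    have : (i : ZMod (p * q)) ^ (toAdd xr).val * k - k = -((q : ZMod (p * q)) * (t * k)) := by
      calc (i : ZMod (p * q)) ^ (toAdd xr).val * k - k
          = -((1 - (i : ZMod (p * q)) ^ (toAdd xr).val) * k) := by ring
        _ = -((q : ZMod (p * q)) * t * k) := by rw [ht]
        _ = -((q : ZMod (p * q)) * (t * k)) := by ring
    linear_combination this
  
theorem normal_NpqOneSub (h : Hyp p q i) : (NpqOneSub h).Normal := by
  constructor
  intro x hx g
  obtain ⟨xl, xr⟩ := x
  obtain ⟨gl, gr⟩ := g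
  obtain ⟨hx1, l, hl⟩ := hx
  simp only at hx1 hl
  subst hx1
  subst hl
  rw [conj_mk]
  refine ⟨rfl, ?_⟩
  cases gl with
  | r k =>
    refine ⟨k + (i : ZMod (p * q)) ^ (toAdd gr).val * l - k, ?_⟩
    show DihedralGroup.r k * h.phiG gr (.r l) * h.phiG 1 (.r k)⁻¹ = _
    rw [map_one, r_inv]
    simp only [MulAut.one_apply]
    rw [h.phiG_r', DihedralGroup.r_mul_r, DihedralGroup.r_mul_r]
    congr 1
    ring
  | sr k =>
    refine ⟨-((i : ZMod (p * q)) ^ (toAdd gr).val * l), ?_⟩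
    show DihedralGroup.sr k * h.phiG gr (.r l) * h.phiG 1 (.sr k)⁻¹ = _
    rw [map_one, sr_inv']
    simp only [MulAut.one_apply]
    rw [h.phiG_r', DihedralGroup.sr_mul_r, DihedralGroup.sr_mul_sr]
    congr 1
    ring

theorem normal_NpSub (h : Hyp p q i) : (NpSub h).Normal := by
  constructor
  intro x hx g
  obtain ⟨xl, xr⟩ := x
  obtain ⟨gl, gr⟩ := g
  obtain ⟨hx1, s, hl⟩ := hx
  simp only at hx1 hl
  subst hx1
  subst hl
  rw [conj_mk]
  refine ⟨rfl, ?_⟩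
  cases gl with
  | r k =>
    refine ⟨(i : ZMod (p * q)) ^ (toAdd gr).val * s, ?_⟩
    show DihedralGroup.r k * h.phiG gr (.r _) * h.phiG 1 (.r k)⁻¹ = _
    rw [map_one, r_inv]
    simp only [MulAut.one_apply]
    rw [h.phiG_r', DihedralGroup.r_mul_r, DihedralGroup.r_mul_r]
    congr 1
    ring
  | sr k =>
    refine ⟨-((i : ZMod (p * q)) ^ (toAdd gr).val * s), ?_⟩
    show DihedralGroup.sr k * h.phiG gr (.r _) * h.phiG 1 (.sr k)⁻¹ = _
    rw [map_one, sr_inv']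
    simp only [MulAut.one_apply]
    rw [h.phiG_r', DihedralGroup.sr_mul_r, DihedralGroup.sr_mul_sr]
    congr 1
    ring

theorem normal_NqSub (h : Hyp p q i) : (NqSub h).Normal := by
  constructor
  intro x hx g
  obtain ⟨xl, xr⟩ := x
  obtain ⟨gl, gr⟩ := g
  obtain ⟨hx1, s, hl⟩ := hx
  simp only at hx1 hl
  subst hx1
  subst hl
  rw [conj_mk]
  refine ⟨rfl, ?_⟩
  cases gl with
  | r k =>
    refine ⟨(i : ZMod (p * q)) ^ (toAdd gr).val * s, ?_⟩
    show DihedralGroup.r k * h.phiG gr (.r _) * h.phiG 1 (.r k)⁻¹ = _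
    rw [map_one, r_inv]
    simp only [MulAut.one_apply]
    rw [h.phiG_r', DihedralGroup.r_mul_r, DihedralGroup.r_mul_r]
    congr 1
    ring
  | sr k =>
    refine ⟨-((i : ZMod (p * q)) ^ (toAdd gr).val * s), ?_⟩
    show DihedralGroup.sr k * h.phiG gr (.r _) * h.phiG 1 (.sr k)⁻¹ = _
    rw [map_one, sr_inv']
    simp only [MulAut.one_apply]
    rw [h.phiG_r', DihedralGroup.sr_mul_r, DihedralGroup.sr_mul_sr]
    congr 1
    ring

theorem normal_N2pqSub (h : Hyp p q i) : (N2pqSub h).Normal :=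
  MonoidHom.normal_ker _

-- nontriviality
theorem ne_bot_of_mem {G : Type*} [Group G] {N : Subgroup G} {x : G} (hx : x ∈ N) (hx1 : x ≠ 1) :
    N ≠ ⊥ := by
  intro hb
  rw [hb, Subgroup.mem_bot] at hx
  exact hx1 hx

theorem NpSub_ne_bot (h : Hyp p q i) : NpSub h ≠ ⊥ :=
  ne_bot_of_mem (x := (⟨DihedralGroup.r ((q : ZMod (p * q)) * 1), 1⟩ : Gpq h))
    ⟨rfl, 1, rfl⟩ (by rw [mul_one]; exact h.mk_rot_ne_one h.q_cast_ne_zero)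

theorem NqSub_ne_bot (h : Hyp p q i) : NqSub h ≠ ⊥ :=
  ne_bot_of_mem (x := (⟨DihedralGroup.r ((p : ZMod (p * q)) * 1), 1⟩ : Gpq h))
    ⟨rfl, 1, rfl⟩ (by rw [mul_one]; exact h.mk_rot_ne_one h.p_cast_ne_zero)

theorem NpqOneSub_ne_bot (h : Hyp p q i) : NpqOneSub h ≠ ⊥ :=
  ne_bot_of_mem (x := (⟨DihedralGroup.r 1, 1⟩ : Gpq h))
    ⟨rfl, 1, rfl⟩ (h.mk_rot_ne_one h.one_cast_ne_zero)

theorem NpqTwoSub_ne_bot (h : Hyp p q i) : NpqTwoSub h ≠ ⊥ :=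
  ne_bot_of_mem (x := (⟨DihedralGroup.r ((q : ZMod (p * q)) * 1), 1⟩ : Gpq h))
    ⟨1, rfl⟩ (by rw [mul_one]; exact h.mk_rot_ne_one h.q_cast_ne_zero)

theorem N2pqSub_ne_bot (h : Hyp p q i) : N2pqSub h ≠ ⊥ :=
  ne_bot_of_mem (x := (⟨DihedralGroup.r 1, 1⟩ : Gpq h))
    rfl (h.mk_rot_ne_one h.one_cast_ne_zero)

theorem NSub_ne_bot (h : Hyp p q i) : NSub h ≠ ⊥ :=
  ne_bot_of_mem (x := (⟨DihedralGroup.r 1, 1⟩ : Gpq h))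
    ⟨1, rfl⟩ (h.mk_rot_ne_one h.one_cast_ne_zero)

-- properness
theorem ne_top_of_not_mem {G : Type*} [Group G] {N : Subgroup G} {x : G} (hx : x ∉ N) :
    N ≠ ⊤ := by
  intro ht
  exact hx (ht ▸ Subgroup.mem_top x)

theorem NpSub_ne_top (h : Hyp p q i) : NpSub h ≠ ⊤ :=
  ne_top_of_not_mem (x := (⟨DihedralGroup.sr 0, 1⟩ : Gpq h)) (by rintro ⟨-, s, hs⟩; simp at hs)

theorem NqSub_ne_top (h : Hyp p q i) : NqSub h ≠ ⊤ :=
  ne_top_of_not_mem (x := (⟨DihedralGroup.sr 0, 1⟩ : Gpq h)) (by rintro ⟨-, s, hs⟩; simp at hs)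

theorem NpqOneSub_ne_top (h : Hyp p q i) : NpqOneSub h ≠ ⊤ :=
  ne_top_of_not_mem (x := (⟨DihedralGroup.sr 0, 1⟩ : Gpq h)) (by rintro ⟨-, s, hs⟩; simp at hs)

theorem NpqTwoSub_ne_top (h : Hyp p q i) : NpqTwoSub h ≠ ⊤ :=
  ne_top_of_not_mem (x := (⟨DihedralGroup.sr 0, 1⟩ : Gpq h)) (by rintro ⟨s, hs⟩; simp at hs)

theorem NSub_ne_top (h : Hyp p q i) : NSub h ≠ ⊤ :=
  ne_top_of_not_mem (x := (⟨DihedralGroup.sr 0, 1⟩ : Gpq h)) (by rintro ⟨s, hs⟩; simp at hs)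

theorem N2pqSub_ne_top (h : Hyp p q i) : N2pqSub h ≠ ⊤ := by
  haveI : Fact (1 < q) := ⟨h.hq.one_lt⟩
  refine ne_top_of_not_mem (x := (⟨1, ofAdd 1⟩ : Gpq h)) ?_
  intro hx
  have h1 : (⟨(1 : DihedralGroup (p * q)), ofAdd (1 : ZMod q)⟩ : Gpq h).right = 1 := hx
  simp only at h1
  have h2 : (1 : ZMod q) = 0 := by
    have := congrArg toAdd h1
    simpa using this
  exact one_ne_zero h2

end Hyp

end Forward
section Gen2

open Multiplicative DihedralGroup

variable {p q i : ℕ}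

namespace Hyp

theorem all_rot_of_bezout (h : Hyp p q i) {N : Subgroup (Gpq h)} {c : ZMod (p * q)} {t : ℤ}
    (hx : (⟨DihedralGroup.r c, 1⟩ : Gpq h) ∈ N) (ht : (t : ZMod (p * q)) * c = 1)
    (l : ZMod (p * q)) : (⟨DihedralGroup.r l, 1⟩ : Gpq h) ∈ N := by
  haveI : NeZero (p * q) := ⟨Nat.mul_ne_zero h.hp.ne_zero h.hq.ne_zero⟩
  have h2 := h.zpow_rot_mem hx ((l.val : ℤ) * t)
  have h3 : (((l.val : ℤ) * t : ℤ) : ZMod (p * q)) * c = l := by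
    push_cast
    calc ((l.val : ℕ) : ZMod (p * q)) * t * c = ((l.val : ℕ) : ZMod (p * q)) * ((t : ZMod (p * q)) * c) := by ring
      _ = l := by rw [ht, mul_one, val_cast_self]
  rw [h3] at h2
  exact h2

theorem q_mult_of_bezout (h : Hyp p q i) {N : Subgroup (Gpq h)} {c : ZMod (p * q)} {t : ℤ}
    (hx : (⟨DihedralGroup.r c, 1⟩ : Gpq h) ∈ N) (ht : (t : ZMod (p * q)) * c = (q : ZMod (p * q)))
    (s : ZMod (p * q)) : (⟨DihedralGroup.r ((q : ZMod (p * q)) * s), 1⟩ : Gpq h) ∈ N := by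
  haveI : NeZero (p * q) := ⟨Nat.mul_ne_zero h.hp.ne_zero h.hq.ne_zero⟩
  have h2 := h.zpow_rot_mem hx ((s.val : ℤ) * t)
  have h3 : (((s.val : ℤ) * t : ℤ) : ZMod (p * q)) * c = (q : ZMod (p * q)) * s := by
    push_cast
    calc ((s.val : ℕ) : ZMod (p * q)) * t * c = ((s.val : ℕ) : ZMod (p * q)) * ((t : ZMod (p * q)) * c) := by ring
      _ = (q : ZMod (p * q)) * s := by rw [ht, val_cast_self]; ring
  rw [h3] at h2
  exact h2

theorem p_mult_of_bezout (h : Hyp p q i) {N : Subgroup (Gpq h)} {c : ZMod (p * q)} {t : ℤ}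
    (hx : (⟨DihedralGroup.r c, 1⟩ : Gpq h) ∈ N) (ht : (t : ZMod (p * q)) * c = (p : ZMod (p * q)))
    (s : ZMod (p * q)) : (⟨DihedralGroup.r ((p : ZMod (p * q)) * s), 1⟩ : Gpq h) ∈ N := by
  haveI : NeZero (p * q) := ⟨Nat.mul_ne_zero h.hp.ne_zero h.hq.ne_zero⟩
  have h2 := h.zpow_rot_mem hx ((s.val : ℤ) * t)
  have h3 : (((s.val : ℤ) * t : ℤ) : ZMod (p * q)) * c = (p : ZMod (p * q)) * s := by
    push_cast
    calc ((s.val : ℕ) : ZMod (p * q)) * t * c = ((s.val : ℕ) : ZMod (p * q)) * ((t : ZMod (p * q)) * c) := by ring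
      _ = (p : ZMod (p * q)) * s := by rw [ht, val_cast_self]; ring
  rw [h3] at h2
  exact h2

theorem all_rot_of_sr (h : Hyp p q i) {N : Subgroup (Gpq h)} (hN : N.Normal)
    {k : ZMod (p * q)} {z : Multiplicative (ZMod q)}
    (hsr : (⟨DihedralGroup.sr k, z⟩ : Gpq h) ∈ N) (l : ZMod (p * q)) :
    (⟨DihedralGroup.r l, 1⟩ : Gpq h) ∈ N := by
  obtain ⟨t, ht⟩ := h.one_add_bezout (toAdd z).val
  exact h.all_rot_of_bezout (h.sr_gen hN hsr) ht l

theorem not_q_dvd_val (h : Hyp p q i) {z : Multiplicative (ZMod q)} (hz : z ≠ 1) :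
    ¬ q ∣ (toAdd z).val := by
  haveI : NeZero q := ⟨h.hq.ne_zero⟩
  intro hd
  have h1 : (toAdd z).val < q := ZMod.val_lt _
  have h2 : (toAdd z).val = 0 := Nat.eq_zero_of_dvd_of_lt hd h1
  apply hz
  have h3 : toAdd z = 0 := (ZMod.val_eq_zero _).mp h2
  rw [← ofAdd_toAdd z, h3, ofAdd_zero]

theorem np_of_rot (h : Hyp p q i) {N : Subgroup (Gpq h)} (hN : N.Normal)
    {l : ZMod (p * q)} {z : Multiplicative (ZMod q)} (hz : z ≠ 1)
    (hx : (⟨DihedralGroup.r l, z⟩ : Gpq h) ∈ N) (s : ZMod (p * q)) :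
    (⟨DihedralGroup.r ((q : ZMod (p * q)) * s), 1⟩ : Gpq h) ∈ N := by
  obtain ⟨t, ht⟩ := h.one_sub_bezout (h.not_q_dvd_val hz)
  exact h.q_mult_of_bezout (h.rot_gen hN hx) ht s

end Hyp

end Gen2
section Classify

open Multiplicative DihedralGroup

variable {p q i : ℕ}

namespace Hyp

theorem gr_sq_ne_one (h : Hyp p q i) {gr : Multiplicative (ZMod q)} (hg : gr ≠ 1) :
    gr * gr ≠ 1 := by
  haveI := Fact.mk h.hq
  intro h2
  apply hg
  have h3 : toAdd gr + toAdd gr = 0 := by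
    have := congrArg toAdd h2
    simpa using this
  have h4 : (2 : ZMod q) * toAdd gr = 0 := by ring_nf; linear_combination h3
  have h5 : toAdd gr = 0 := by
    rcases mul_eq_zero.mp h4 with h6 | h6
    · exact absurd h6 h.two_ne_zero_q
    · exact h6
  rw [← ofAdd_toAdd gr, h5, ofAdd_zero]

theorem classify (h : Hyp p q i) (N : Subgroup (Gpq h)) (hN : N.Normal)
    (hbot : N ≠ ⊥) (htop : N ≠ ⊤) :
    N = NpSub h ∨ N = NqSub h ∨ N = NpqOneSub h ∨ N = NpqTwoSub h ∨
      N = N2pqSub h ∨ N = NSub h := by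
  classical
  haveI : NeZero (p * q) := ⟨Nat.mul_ne_zero h.hp.ne_zero h.hq.ne_zero⟩
  haveI : NeZero q := ⟨h.hq.ne_zero⟩
  haveI : NeZero p := ⟨h.hp.ne_zero⟩
  haveI := Fact.mk h.hq
  haveI := Fact.mk h.hp
  by_cases hsr : ∃ k z, (⟨DihedralGroup.sr k, z⟩ : Gpq h) ∈ N
  · -- contains a reflection-type element
    obtain ⟨k, z, hk⟩ := hsr
    have hrot : ∀ l, (⟨DihedralGroup.r l, 1⟩ : Gpq h) ∈ N := h.all_rot_of_sr hN hk
    -- all elements of N have trivial right component, else N = ⊤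
    have hnoc : ∀ g ∈ N, SemidirectProduct.right g = 1 := by
      by_contra hcon
      push_neg at hcon
      obtain ⟨g, hg, hg1⟩ := hcon
      apply htop
      obtain ⟨gl, gr⟩ := g
      have hg1' : gr ≠ 1 := hg1
      have hw : ∃ w, w ≠ (1 : Multiplicative (ZMod q)) ∧
          (⟨(1 : DihedralGroup (p * q)), w⟩ : Gpq h) ∈ N := by
        cases gl with
        | r l =>
          refine ⟨gr, hg1', ?_⟩
          have h1 := N.mul_mem (hrot (-l)) hg
          rw [rot_mul_mk, DihedralGroup.r_mul_r, neg_add_cancel, ← DihedralGroup.one_def] at h1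
          exact h1
        | sr k' =>
          have h0 : (⟨DihedralGroup.sr 0, gr⟩ : Gpq h) ∈ N := by
            have h1 := N.mul_mem (hrot k') hg
            rw [rot_mul_mk, DihedralGroup.r_mul_sr, sub_self] at h1
            exact h1
          have hsq : (⟨DihedralGroup.sr 0, gr⟩ : Gpq h) * ⟨DihedralGroup.sr 0, gr⟩
              = ⟨1, gr * gr⟩ := by
            rw [mk_mul, h.phiG_sr', mul_zero, DihedralGroup.sr_mul_sr, sub_self,
              ← DihedralGroup.one_def]
          exact ⟨gr * gr, h.gr_sq_ne_one hg1', by rw [← hsq]; exact N.mul_mem h0 h0⟩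
      obtain ⟨w, hw1, hww⟩ := hw
      have hallw : ∀ w', (⟨(1 : DihedralGroup (p * q)), w'⟩ : Gpq h) ∈ N :=
        fun w' => h.inr_gen hww hw1 w'
      have hsrk1 : (⟨DihedralGroup.sr k, 1⟩ : Gpq h) ∈ N := by
        have h1 := N.mul_mem hk (hallw z⁻¹)
        rw [mk_mul, map_one, mul_one, mul_inv_cancel] at h1
        exact h1
      rw [Subgroup.eq_top_iff']
      intro x
      obtain ⟨xl, xr⟩ := x
      rw [mk_split]
      refine N.mul_mem ?_ (hallw xr)
      cases xl with
      | r l => exact hrot l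
      | sr k'' =>
        have h1 := N.mul_mem (hrot (k - k'')) hsrk1
        rw [rot_mul_mk, DihedralGroup.r_mul_sr,
          show k - (k - k'') = k'' from by ring] at h1
        exact h1
    -- N = N2pqSub
    refine Or.inr (Or.inr (Or.inr (Or.inr (Or.inl ?_))))
    have hz1 : z = 1 := hnoc _ hk
    subst hz1
    ext x
    obtain ⟨xl, xr⟩ := x
    constructor
    · intro hx
      exact hnoc _ hx
    · intro hx
      have hxr : xr = 1 := hx
      subst hxr
      cases xl with
      | r l => exact hrot l
      | sr k'' =>
        have h1 := N.mul_mem (hrot (k - k'')) hk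
        rw [rot_mul_mk, DihedralGroup.r_mul_sr,
          show k - (k - k'') = k'' from by ring] at h1
        exact h1
  · -- no reflection-type elements
    have hnos : ∀ g ∈ N, ∃ l, SemidirectProduct.left g = DihedralGroup.r l := by
      intro g hg
      obtain ⟨gl, gr⟩ := g
      cases gl with
      | r l => exact ⟨l, rfl⟩
      | sr k => exact absurd ⟨k, gr, hg⟩ hsr
    by_cases hc : ∃ g ∈ N, SemidirectProduct.right g ≠ 1
    · -- contains an element with nontrivial right component
      obtain ⟨g, hg, hg1⟩ := hc
      obtain ⟨gl, gr⟩ := g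
      obtain ⟨l, hl⟩ := hnos _ hg
      simp only at hl
      subst hl
      have hg1' : gr ≠ 1 := hg1
      have hNp : ∀ s, (⟨DihedralGroup.r ((q : ZMod (p * q)) * s), 1⟩ : Gpq h) ∈ N :=
        h.np_of_rot hN hg1' hg
      by_cases hq2 : ∃ l' z', (⟨DihedralGroup.r l', z'⟩ : Gpq h) ∈ N ∧ cQ p q l' ≠ 0
      · -- N = NSub
        obtain ⟨l', z', hl', hcq⟩ := hq2
        have he := h.conj_b_gen hN hl'
        have hce : cQ p q (-(2 * l')) ≠ 0 := by
          rw [map_neg, map_mul, show (cQ p q) 2 = 2 from map_ofNat _ 2]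
          intro h0
          rcases mul_eq_zero.mp (neg_eq_zero.mp h0) with h2 | h2
          · exact h.two_ne_zero_q h2
          · exact hcq h2
        -- q does not divide the value
        have hqnd : ¬ q ∣ (-(2 * l') : ZMod (p * q)).val := by
          intro hd
          apply hce
          rw [cQ, ZMod.castHom_apply, ← ZMod.natCast_val]
          exact (ZMod.natCast_eq_zero_iff _ q).mpr hd
        have hrot : ∀ l'', (⟨DihedralGroup.r l'', 1⟩ : Gpq h) ∈ N := by
          have hco : Nat.Coprime ((-(2 * l') : ZMod (p * q)).val) q :=
            ((h.hq.coprime_iff_not_dvd.mpr hqnd).symm)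
          -- Bezout: A * e.val + B * q = 1
          have hb := Int.gcd_eq_gcd_ab ((-(2 * l') : ZMod (p * q)).val : ℤ) ((q : ℕ) : ℤ)
          rw [show Int.gcd ((-(2 * l') : ZMod (p * q)).val : ℤ) ((q : ℕ) : ℤ) = 1 from by
            rw [Int.gcd_natCast_natCast]; exact hco] at hb
          set A := Int.gcdA ((-(2 * l') : ZMod (p * q)).val : ℤ) ((q : ℕ) : ℤ)
          set B := Int.gcdB ((-(2 * l') : ZMod (p * q)).val : ℤ) ((q : ℕ) : ℤ)
          have hA := h.zpow_rot_mem he A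
          have hB := h.zpow_rot_mem (hNp 1) B
          have h1 : (⟨DihedralGroup.r 1, 1⟩ : Gpq h) ∈ N := by
            have h2 := N.mul_mem hA hB
            rw [rot_mul_mk, DihedralGroup.r_mul_r] at h2
            have h3 : (A : ZMod (p * q)) * (-(2 * l')) + (B : ZMod (p * q)) * ((q : ZMod (p * q)) * 1)
                = 1 := by
              have h4 := congrArg (fun z : ℤ => (z : ZMod (p * q))) hb
              push_cast at h4
              rw [val_cast_self] at h4
              rw [mul_one]
              linear_combination -h4
            rw [h3] at h2
            exact h2
          exact fun l'' => h.all_rot_of_bezout h1 (t := 1) (by push_cast; ring) l''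
        have h1gr : (⟨(1 : DihedralGroup (p * q)), gr⟩ : Gpq h) ∈ N := by
          have h1 := N.mul_mem (hrot (-l)) hg
          rw [rot_mul_mk, DihedralGroup.r_mul_r, neg_add_cancel, ← DihedralGroup.one_def] at h1
          exact h1
        have hallw := h.inr_gen h1gr hg1'
        refine Or.inr (Or.inr (Or.inr (Or.inr (Or.inr ?_))))
        ext x
        obtain ⟨xl, xr⟩ := x
        constructor
        · intro hx
          exact hnos _ hx
        · rintro ⟨l0, hl0⟩
          simp only at hl0
          subst hl0
          rw [mk_split]
          exact N.mul_mem (hrot l0) (hallw xr)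
      · -- N = NpqTwoSub
        push_neg at hq2
        have h1gr : (⟨(1 : DihedralGroup (p * q)), gr⟩ : Gpq h) ∈ N := by
          obtain ⟨s, hs⟩ := (h.cQ_zero_iff l).mp ((hq2 l gr hg))
          subst hs
          have h1 := N.mul_mem (hNp (-s)) hg
          rw [rot_mul_mk, DihedralGroup.r_mul_r,
            show (q : ZMod (p * q)) * -s + (q : ZMod (p * q)) * s = 0 from by ring,
            ← DihedralGroup.one_def] at h1
          exact h1
        have hallw := h.inr_gen h1gr hg1'
        refine Or.inr (Or.inr (Or.inr (Or.inl ?_)))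
        ext x
        obtain ⟨xl, xr⟩ := x
        constructor
        · intro hx
          obtain ⟨l0, hl0⟩ := hnos _ hx
          simp only at hl0
          subst hl0
          obtain ⟨s, hs⟩ := (h.cQ_zero_iff l0).mp (hq2 l0 xr hx)
          exact ⟨s, congrArg DihedralGroup.r hs⟩
        · rintro ⟨s, hs⟩
          simp only at hs
          subst hs
          rw [mk_split]
          exact N.mul_mem (hNp s) (hallw xr)
    · -- all elements have trivial right component and rotation left component
      push_neg at hc
      have hcP : (q : ZMod p) ≠ 0 := by
        intro h0
        have hd : p ∣ q := (ZMod.natCast_eq_zero_iff q p).mp h0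
        exact h.p_ne_q ((Nat.prime_dvd_prime_iff_eq h.hp h.hq).mp hd)
      have hcQ : (p : ZMod q) ≠ 0 := by
        intro h0
        have hd : q ∣ p := (ZMod.natCast_eq_zero_iff p q).mp h0
        exact h.p_ne_q ((Nat.prime_dvd_prime_iff_eq h.hq h.hp).mp hd).symm
      by_cases hP : ∃ l, (⟨DihedralGroup.r l, 1⟩ : Gpq h) ∈ N ∧ cP p q l ≠ 0
      · by_cases hQ : ∃ l, (⟨DihedralGroup.r l, 1⟩ : Gpq h) ∈ N ∧ cQ p q l ≠ 0
        · -- N = NpqOneSub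
          obtain ⟨a, ha, hpa⟩ := hP
          obtain ⟨b, hb, hqb⟩ := hQ
          -- w := q * a + p * b is a unit mod p*q
          have hu : (⟨DihedralGroup.r ((q : ZMod (p * q)) * a), 1⟩ : Gpq h) ∈ N := by
            have h1 := h.zpow_rot_mem ha ((q : ℕ) : ℤ)
            rwa [show (((q : ℕ) : ℤ) : ZMod (p * q)) = (q : ZMod (p * q)) from by push_cast; rfl]
              at h1
          have hv : (⟨DihedralGroup.r ((p : ZMod (p * q)) * b), 1⟩ : Gpq h) ∈ N := by
            have h1 := h.zpow_rot_mem hb ((p : ℕ) : ℤ)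
            rwa [show (((p : ℕ) : ℤ) : ZMod (p * q)) = (p : ZMod (p * q)) from by push_cast; rfl]
              at h1
          set w : ZMod (p * q) := (q : ZMod (p * q)) * a + (p : ZMod (p * q)) * b with hwdef
          have hwmem : (⟨DihedralGroup.r w, 1⟩ : Gpq h) ∈ N := by
            have h1 := N.mul_mem hu hv
            rw [rot_mul_mk, DihedralGroup.r_mul_r] at h1
            exact h1
          have hwP : cP p q w ≠ 0 := by
            rw [hwdef, map_add, map_mul, map_mul, map_natCast, map_natCast, ZMod.natCast_self,
              zero_mul, add_zero]
            haveI := Fact.mk h.hp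
            exact mul_ne_zero hcP hpa
          have hwQ : cQ p q w ≠ 0 := by
            rw [hwdef, map_add, map_mul, map_mul, map_natCast, map_natCast, ZMod.natCast_self,
              zero_mul, zero_add]
            haveI := Fact.mk h.hq
            exact mul_ne_zero hcQ hqb
          have hnpd : ¬ p ∣ w.val := by
            intro hd
            apply hwP
            rw [cP, ZMod.castHom_apply, ← ZMod.natCast_val]
            exact (ZMod.natCast_eq_zero_iff _ p).mpr hd
          have hnqd : ¬ q ∣ w.val := by
            intro hd
            apply hwQ
            rw [cQ, ZMod.castHom_apply, ← ZMod.natCast_val]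
            exact (ZMod.natCast_eq_zero_iff _ q).mpr hd
          have hco : Nat.Coprime w.val (p * q) :=
            Nat.Coprime.mul_right ((h.hp.coprime_iff_not_dvd.mpr hnpd).symm)
              ((h.hq.coprime_iff_not_dvd.mpr hnqd).symm)
          obtain ⟨t, ht⟩ := bezout_zmod (p * q) (w.val : ℤ) 1 (by
            rw [Int.gcd_natCast_natCast, hco]; exact one_dvd _)
          have ht' : (t : ZMod (p * q)) * w = 1 := by
            have h2 : (((w.val : ℤ)) : ZMod (p * q)) = w := by push_cast; rw [val_cast_self]
            rw [← h2]
            rw [ht]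
            push_cast
            rfl
          have hrot := fun l'' => h.all_rot_of_bezout hwmem ht' l''
          refine Or.inr (Or.inr (Or.inl ?_))
          ext x
          obtain ⟨xl, xr⟩ := x
          constructor
          · intro hx
            exact ⟨hc _ hx, hnos _ hx⟩
          · rintro ⟨hx1, l0, hl0⟩
            simp only at hx1 hl0
            subst hx1
            subst hl0
            exact hrot l0
        · -- N = NqSub (multiples of p)
          push_neg at hQ
          obtain ⟨a, ha, hpa⟩ := hP
          have hqa : cQ p q a = 0 := (hQ a ha)
          -- gcd(a.val, p*q) = p
          have hqd : q ∣ a.val := by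
            have h1 : ((a.val : ℕ) : ZMod q) = 0 := by
              rw [ZMod.natCast_val]
              rw [cQ, ZMod.castHom_apply] at hqa
              exact hqa
            exact (ZMod.natCast_eq_zero_iff _ q).mp h1
          have hnpd : ¬ p ∣ a.val := by
            intro hd
            apply hpa
            rw [cP, ZMod.castHom_apply, ← ZMod.natCast_val]
            exact (ZMod.natCast_eq_zero_iff _ p).mpr hd
          have hg : Nat.gcd a.val (p * q) = q := by
            have h1 : q ∣ Nat.gcd a.val (p * q) := Nat.dvd_gcd hqd (Dvd.intro_left p rfl)
            have h2 : Nat.gcd a.val (p * q) ∣ p * q := Nat.gcd_dvd_right _ _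
            have h3 : ¬ p ∣ Nat.gcd a.val (p * q) := fun hd =>
              hnpd (dvd_trans hd (Nat.gcd_dvd_left _ _))
            have h4 : Nat.Coprime (Nat.gcd a.val (p * q)) p :=
              ((h.hp.coprime_iff_not_dvd.mpr h3).symm)
            exact Nat.dvd_antisymm (h4.dvd_of_dvd_mul_left h2) h1
          obtain ⟨t, ht⟩ := bezout_zmod (p * q) (a.val : ℤ) q (by
            rw [Int.gcd_natCast_natCast, hg])
          have ht' : (t : ZMod (p * q)) * a = (q : ZMod (p * q)) := by
            have h2 : (((a.val : ℤ)) : ZMod (p * q)) = a := by push_cast; rw [val_cast_self]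
            rw [← h2, ht]
            push_cast
            rfl
          have hgen := fun s => h.q_mult_of_bezout ha ht' s
          refine Or.inl ?_
          ext x
          obtain ⟨xl, xr⟩ := x
          constructor
          · intro hx
            refine ⟨hc _ hx, ?_⟩
            obtain ⟨l0, hl0⟩ := hnos _ hx
            simp only at hl0
            subst hl0
            have hq0 : cQ p q l0 = 0 := by
              have hx' : (⟨DihedralGroup.r l0, (1 : Multiplicative (ZMod q))⟩ : Gpq h) ∈ N := by
                have := hc _ hx
                simp only at this
                rwa [this] at hx
              exact (hQ l0 hx')
            obtain ⟨s, hs⟩ := (h.cQ_zero_iff l0).mp hq0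
            exact ⟨s, congrArg DihedralGroup.r hs⟩
          · rintro ⟨hx1, s, hs⟩
            simp only at hx1 hs
            subst hx1
            subst hs
            exact hgen s
      · by_cases hQ : ∃ l, (⟨DihedralGroup.r l, 1⟩ : Gpq h) ∈ N ∧ cQ p q l ≠ 0
        ·
          -- careful: NqSub = multiples of p. ¬hP means all cP l = 0, i.e. all multiples of p
          push_neg at hP
          obtain ⟨b, hb, hqb⟩ := hQ
          have hpb : cP p q b = 0 := (hP b hb)
          have hpd : p ∣ b.val := by
            have h1 : ((b.val : ℕ) : ZMod p) = 0 := by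
              rw [ZMod.natCast_val]
              rw [cP, ZMod.castHom_apply] at hpb
              exact hpb
            exact (ZMod.natCast_eq_zero_iff _ p).mp h1
          have hnqd : ¬ q ∣ b.val := by
            intro hd
            apply hqb
            rw [cQ, ZMod.castHom_apply, ← ZMod.natCast_val]
            exact (ZMod.natCast_eq_zero_iff _ q).mpr hd
          have hg : Nat.gcd b.val (p * q) = p := by
            have h1 : p ∣ Nat.gcd b.val (p * q) := Nat.dvd_gcd hpd (Dvd.intro q rfl)
            have h2 : Nat.gcd b.val (p * q) ∣ p * q := Nat.gcd_dvd_right _ _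
            have h3 : ¬ q ∣ Nat.gcd b.val (p * q) := fun hd =>
              hnqd (dvd_trans hd (Nat.gcd_dvd_left _ _))
            have h4 : Nat.Coprime (Nat.gcd b.val (p * q)) q :=
              ((h.hq.coprime_iff_not_dvd.mpr h3).symm)
            exact Nat.dvd_antisymm (h4.dvd_of_dvd_mul_right h2) h1
          obtain ⟨t, ht⟩ := bezout_zmod (p * q) (b.val : ℤ) p (by
            rw [Int.gcd_natCast_natCast, hg])
          have ht' : (t : ZMod (p * q)) * b = (p : ZMod (p * q)) := by
            have h2 : (((b.val : ℤ)) : ZMod (p * q)) = b := by push_cast; rw [val_cast_self]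
            rw [← h2, ht]
            push_cast
            rfl
          have hgen := fun s => h.p_mult_of_bezout hb ht' s
          refine Or.inr (Or.inl ?_)
          ext x
          obtain ⟨xl, xr⟩ := x
          constructor
          · intro hx
            refine ⟨hc _ hx, ?_⟩
            obtain ⟨l0, hl0⟩ := hnos _ hx
            simp only at hl0
            subst hl0
            have hp0 : cP p q l0 = 0 := by
              have hx' : (⟨DihedralGroup.r l0, (1 : Multiplicative (ZMod q))⟩ : Gpq h) ∈ N := by
                have := hc _ hx
                simp only at this
                rwa [this] at hx
              exact (hP l0 hx')
            obtain ⟨s, hs⟩ := (h.cP_zero_iff l0).mp hp0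
            exact ⟨s, congrArg DihedralGroup.r hs⟩
          · rintro ⟨hx1, s, hs⟩
            simp only at hx1 hs
            subst hx1
            subst hs
            exact hgen s
        · -- N = ⊥, contradiction
          exfalso
          apply hbot
          push_neg at hP hQ
          rw [Subgroup.eq_bot_iff_forall]
          intro x hx
          obtain ⟨xl, xr⟩ := x
          have hx1 : xr = 1 := hc _ hx
          subst hx1
          obtain ⟨l0, hl0⟩ := hnos _ hx
          simp only at hl0
          subst hl0
          have hp0 : cP p q l0 = 0 := (hP l0 hx)
          have hq0 : cQ p q l0 = 0 := (hQ l0 hx)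
          have : l0 = 0 := h.crt_inj hp0 hq0
          subst this
          rw [← DihedralGroup.one_def]
          rfl

end Hyp

end Classify
section Isos

open Multiplicative DihedralGroup

variable {p q i : ℕ}

namespace Hyp

theorem q_mul_val (h : Hyp p q i) (s : ZMod (p * q)) :
    (((cP p q s).val : ℕ) : ZMod (p * q)) * (q : ZMod (p * q)) = s * (q : ZMod (p * q)) := by
  haveI : NeZero p := ⟨h.hp.ne_zero⟩
  haveI : NeZero (p * q) := ⟨Nat.mul_ne_zero h.hp.ne_zero h.hq.ne_zero⟩
  have h1 : (cP p q s).val = s.val % p := by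
    rw [cP, ZMod.castHom_apply,
      show (s.cast : ZMod p) = ((s.val : ℕ) : ZMod p) from (ZMod.natCast_val s).symm,
      ZMod.val_natCast]
  have h2 : (s.val % p) * q ≡ s.val * q [MOD p * q] :=
    Nat.ModEq.mul_right' q (Nat.mod_modEq s.val p)
  have h3 := (ZMod.natCast_eq_natCast_iff _ _ (p * q)).mpr h2
  push_cast at h3
  rw [h1, h3, val_cast_self]

theorem p_mul_val (h : Hyp p q i) (s : ZMod (p * q)) :
    (((cQ p q s).val : ℕ) : ZMod (p * q)) * (p : ZMod (p * q)) = s * (p : ZMod (p * q)) := by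
  haveI : NeZero q := ⟨h.hq.ne_zero⟩
  haveI : NeZero (p * q) := ⟨Nat.mul_ne_zero h.hp.ne_zero h.hq.ne_zero⟩
  have h1 : (cQ p q s).val = s.val % q := by
    rw [cQ, ZMod.castHom_apply,
      show (s.cast : ZMod q) = ((s.val : ℕ) : ZMod q) from (ZMod.natCast_val s).symm,
      ZMod.val_natCast]
  have h2 : (s.val % q) * p ≡ s.val * p [MOD q * p] :=
    Nat.ModEq.mul_right' p (Nat.mod_modEq s.val q)
  have h2' : (s.val % q) * p ≡ s.val * p [MOD p * q] := by
    simpa [Nat.ModEq, mul_comm] using h2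
  have h3 := (ZMod.natCast_eq_natCast_iff _ _ (p * q)).mpr h2'
  push_cast at h3
  rw [h1, h3, val_cast_self]

/-- `(r q, 1)` as element of `Gpq`. -/
theorem gq_pow_p (h : Hyp p q i) :
    (⟨DihedralGroup.r (q : ZMod (p * q)), 1⟩ : Gpq h) ^ p = 1 := by
  have h2 := h.zpow_rot (q : ZMod (p * q)) (p : ℤ)
  rw [zpow_natCast] at h2
  rw [h2]
  have h3 : (((p : ℤ)) : ZMod (p * q)) * (q : ZMod (p * q)) = 0 := by
    push_cast
    rw [← Nat.cast_mul, ZMod.natCast_self]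
  rw [h3]
  rfl

theorem gp_pow_q (h : Hyp p q i) :
    (⟨DihedralGroup.r (p : ZMod (p * q)), 1⟩ : Gpq h) ^ q = 1 := by
  have h2 := h.zpow_rot (p : ZMod (p * q)) (q : ℤ)
  rw [zpow_natCast] at h2
  rw [h2]
  have h3 : (((q : ℤ)) : ZMod (p * q)) * (p : ZMod (p * q)) = 0 := by
    push_cast
    rw [mul_comm, ← Nat.cast_mul, ZMod.natCast_self]
  rw [h3]
  rfl

theorem gq_pow (h : Hyp p q i) (k : ℕ) :
    (⟨DihedralGroup.r (q : ZMod (p * q)), 1⟩ : Gpq h) ^ k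
      = ⟨DihedralGroup.r ((k : ZMod (p * q)) * (q : ZMod (p * q))), 1⟩ := by
  have h2 := h.zpow_rot (q : ZMod (p * q)) (k : ℤ)
  rw [zpow_natCast] at h2
  rw [h2]
  norm_cast

theorem gp_pow (h : Hyp p q i) (k : ℕ) :
    (⟨DihedralGroup.r (p : ZMod (p * q)), 1⟩ : Gpq h) ^ k
      = ⟨DihedralGroup.r ((k : ZMod (p * q)) * (p : ZMod (p * q))), 1⟩ := by
  have h2 := h.zpow_rot (p : ZMod (p * q)) (k : ℤ)
  rw [zpow_natCast] at h2
  rw [h2]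
  norm_cast

theorem rot_q_eq_one_iff (h : Hyp p q i) (x : Multiplicative (ZMod p)) :
    ((((toAdd x).val : ℕ) : ZMod (p * q)) * (q : ZMod (p * q)) = 0) → x = 1 := by
  haveI : NeZero p := ⟨h.hp.ne_zero⟩
  haveI : NeZero (p * q) := ⟨Nat.mul_ne_zero h.hp.ne_zero h.hq.ne_zero⟩
  intro h0
  have h1 : (((toAdd x).val * q : ℕ) : ZMod (p * q)) = 0 := by push_cast; exact h0
  have h2 : p * q ∣ (toAdd x).val * q := (ZMod.natCast_eq_zero_iff _ _).mp h1
  have h3 : p ∣ (toAdd x).val := by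
    rcases h2 with ⟨c, hc⟩
    refine ⟨c, ?_⟩
    have hq0 : 0 < q := h.hq.pos
    nlinarith [hc]
  have h4 : (toAdd x).val = 0 :=
    Nat.eq_zero_of_dvd_of_lt h3 (ZMod.val_lt _)
  have h5 : toAdd x = 0 := (ZMod.val_eq_zero _).mp h4
  rw [← ofAdd_toAdd x, h5, ofAdd_zero]

theorem rot_p_eq_one_iff (h : Hyp p q i) (x : Multiplicative (ZMod q)) :
    ((((toAdd x).val : ℕ) : ZMod (p * q)) * (p : ZMod (p * q)) = 0) → x = 1 := by
  haveI : NeZero q := ⟨h.hq.ne_zero⟩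
  haveI : NeZero (p * q) := ⟨Nat.mul_ne_zero h.hp.ne_zero h.hq.ne_zero⟩
  intro h0
  have h1 : (((toAdd x).val * p : ℕ) : ZMod (p * q)) = 0 := by push_cast; exact h0
  have h2 : p * q ∣ (toAdd x).val * p := (ZMod.natCast_eq_zero_iff _ _).mp h1
  have h3 : q ∣ (toAdd x).val := by
    rcases h2 with ⟨c, hc⟩
    refine ⟨c, ?_⟩
    have hp0 : 0 < p := h.hp.pos
    nlinarith [hc]
  have h4 : (toAdd x).val = 0 :=
    Nat.eq_zero_of_dvd_of_lt h3 (ZMod.val_lt _)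
  have h5 : toAdd x = 0 := (ZMod.val_eq_zero _).mp h4
  rw [← ofAdd_toAdd x, h5, ofAdd_zero]

theorem iso_Np (h : Hyp p q i) : Nonempty (↥(NpSub h) ≃* Multiplicative (ZMod p)) := by
  haveI : NeZero p := ⟨h.hp.ne_zero⟩
  let f : Multiplicative (ZMod p) →* Gpq h := zmodPow p _ h.gq_pow_p
  have hfx : ∀ x, f x = ⟨DihedralGroup.r ((((toAdd x).val : ℕ) : ZMod (p * q))
      * (q : ZMod (p * q))), 1⟩ := fun x => h.gq_pow (toAdd x).val
  have hmem : ∀ x, f x ∈ NpSub h := by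
    intro x
    rw [hfx]
    exact ⟨rfl, (((toAdd x).val : ℕ) : ZMod (p * q)), congrArg DihedralGroup.r (mul_comm _ _)⟩
  let f' := f.codRestrict (NpSub h) hmem
  have hinj : Function.Injective f' := by
    rw [injective_iff_map_eq_one]
    intro a ha
    have h1 : f a = 1 := congrArg Subtype.val ha
    rw [hfx] at h1
    have h2 := congrArg SemidirectProduct.left h1
    simp only [SemidirectProduct.one_left] at h2
    rw [DihedralGroup.one_def] at h2
    exact h.rot_q_eq_one_iff a (by injection h2)
  have hsurj : Function.Surjective f' := by
    rintro ⟨x, hx⟩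
    obtain ⟨hx1, s, hs⟩ := hx
    obtain ⟨xl, xr⟩ := x
    simp only at hx1 hs
    subst hx1
    subst hs
    refine ⟨ofAdd (cP p q s), ?_⟩
    apply Subtype.ext
    show f (ofAdd (cP p q s)) = _
    rw [hfx]
    congr 1
    rw [toAdd_ofAdd, h.q_mul_val]
    congr 1
    ring
  exact ⟨(MulEquiv.ofBijective f' ⟨hinj, hsurj⟩).symm⟩

theorem iso_Nq (h : Hyp p q i) : Nonempty (↥(NqSub h) ≃* Multiplicative (ZMod q)) := by
  haveI : NeZero q := ⟨h.hq.ne_zero⟩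
  let f : Multiplicative (ZMod q) →* Gpq h := zmodPow q _ h.gp_pow_q
  have hfx : ∀ x, f x = ⟨DihedralGroup.r ((((toAdd x).val : ℕ) : ZMod (p * q))
      * (p : ZMod (p * q))), 1⟩ := fun x => h.gp_pow (toAdd x).val
  have hmem : ∀ x, f x ∈ NqSub h := by
    intro x
    rw [hfx]
    exact ⟨rfl, (((toAdd x).val : ℕ) : ZMod (p * q)), congrArg DihedralGroup.r (mul_comm _ _)⟩
  let f' := f.codRestrict (NqSub h) hmem
  have hinj : Function.Injective f' := by
    rw [injective_iff_map_eq_one]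
    intro a ha
    have h1 : f a = 1 := congrArg Subtype.val ha
    rw [hfx] at h1
    have h2 := congrArg SemidirectProduct.left h1
    simp only [SemidirectProduct.one_left] at h2
    rw [DihedralGroup.one_def] at h2
    exact h.rot_p_eq_one_iff a (by injection h2)
  have hsurj : Function.Surjective f' := by
    rintro ⟨x, hx⟩
    obtain ⟨hx1, s, hs⟩ := hx
    obtain ⟨xl, xr⟩ := x
    simp only at hx1 hs
    subst hx1
    subst hs
    refine ⟨ofAdd (cQ p q s), ?_⟩
    apply Subtype.ext
    show f (ofAdd (cQ p q s)) = _
    rw [hfx]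
    congr 1
    rw [toAdd_ofAdd, h.p_mul_val]
    congr 1
    ring
  exact ⟨(MulEquiv.ofBijective f' ⟨hinj, hsurj⟩).symm⟩

theorem iso_NpqOne (h : Hyp p q i) :
    Nonempty (↥(NpqOneSub h) ≃* Multiplicative (ZMod (p * q))) := by
  haveI : NeZero (p * q) := ⟨Nat.mul_ne_zero h.hp.ne_zero h.hq.ne_zero⟩
  let f : Multiplicative (ZMod (p * q)) →* Gpq h :=
    SemidirectProduct.inl.comp (rHom (p * q))
  have hmem : ∀ x, f x ∈ NpqOneSub h := fun x => ⟨rfl, toAdd x, rfl⟩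
  let f' := f.codRestrict (NpqOneSub h) hmem
  have hinj : Function.Injective f' := by
    rw [injective_iff_map_eq_one]
    intro a ha
    have h1 : f a = 1 := congrArg Subtype.val ha
    have h2 := congrArg SemidirectProduct.left h1
    simp only [SemidirectProduct.one_left] at h2
    rw [DihedralGroup.one_def] at h2
    have h3 : toAdd a = 0 := by injection h2
    rw [← ofAdd_toAdd a, h3, ofAdd_zero]
  have hsurj : Function.Surjective f' := by
    rintro ⟨x, hx1, l, hl⟩
    obtain ⟨xl, xr⟩ := x
    simp only at hx1 hl
    subst hx1
    subst hl
    exact ⟨ofAdd l, Subtype.ext rfl⟩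
  exact ⟨(MulEquiv.ofBijective f' ⟨hinj, hsurj⟩).symm⟩

theorem iso_N2pq (h : Hyp p q i) :
    Nonempty (↥(N2pqSub h) ≃* DihedralGroup (p * q)) := by
  let f : DihedralGroup (p * q) →* Gpq h := SemidirectProduct.inl
  have hmem : ∀ x, f x ∈ N2pqSub h := fun x => SemidirectProduct.rightHom_inl x
  let f' := f.codRestrict (N2pqSub h) hmem
  have hinj : Function.Injective f' :=
    fun a b hab => SemidirectProduct.inl_injective (congrArg Subtype.val hab)
  have hsurj : Function.Surjective f' := by
    rintro ⟨x, hx⟩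
    obtain ⟨xl, xr⟩ := x
    have hx1 : xr = 1 := hx
    subst hx1
    exact ⟨xl, Subtype.ext rfl⟩
  exact ⟨(MulEquiv.ofBijective f' ⟨hinj, hsurj⟩).symm⟩

theorem key5 (h : Hyp p q i) (k : ℕ) (x : ZMod p) :
    (((((i : ZMod p) ^ k * x).val : ℕ)) : ZMod (p * q)) * (q : ZMod (p * q))
      = (i : ZMod (p * q)) ^ k * (((x.val : ℕ) : ZMod (p * q)) * (q : ZMod (p * q))) := by
  haveI : NeZero p := ⟨h.hp.ne_zero⟩
  haveI : NeZero (p * q) := ⟨Nat.mul_ne_zero h.hp.ne_zero h.hq.ne_zero⟩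
  have h1 : (i : ZMod p) ^ k * x = ((i ^ k * x.val : ℕ) : ZMod p) := by
    push_cast
    rw [val_cast_self]
  have h2 : ((i : ZMod p) ^ k * x).val = (i ^ k * x.val) % p := by
    rw [h1, ZMod.val_natCast]
  have h3 : ((i ^ k * x.val) % p) * q ≡ (i ^ k * x.val) * q [MOD p * q] :=
    Nat.ModEq.mul_right' q (Nat.mod_modEq _ p)
  have h4 := (ZMod.natCast_eq_natCast_iff _ _ (p * q)).mpr h3
  push_cast at h4
  rw [h2, h4]
  ring

theorem iso_NpqTwo (h : Hyp p q i) : Nonempty (↥(NpqTwoSub h) ≃* Fpq h) := by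
  haveI : NeZero p := ⟨h.hp.ne_zero⟩
  haveI : NeZero q := ⟨h.hq.ne_zero⟩
  haveI : NeZero (p * q) := ⟨Nat.mul_ne_zero h.hp.ne_zero h.hq.ne_zero⟩
  let fp : Multiplicative (ZMod p) →* Gpq h := zmodPow p _ h.gq_pow_p
  have hfx : ∀ x, fp x = ⟨DihedralGroup.r ((((toAdd x).val : ℕ) : ZMod (p * q))
      * (q : ZMod (p * q))), 1⟩ := fun x => h.gq_pow (toAdd x).val
  have hcomp : ∀ z : Multiplicative (ZMod q),
      fp.comp (h.phiF z).toMonoidHom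
        = (MulAut.conj ((SemidirectProduct.inr : Multiplicative (ZMod q) →* Gpq h) z)).toMonoidHom.comp fp := by
    intro z
    apply MonoidHom.ext
    intro x
    show fp (h.phiF z x) = MulAut.conj (SemidirectProduct.inr z) (fp x)
    have hconj : MulAut.conj ((SemidirectProduct.inr : Multiplicative (ZMod q) →* Gpq h) z) (fp x)
        = SemidirectProduct.inl (h.phiG z (DihedralGroup.r ((((toAdd x).val : ℕ) : ZMod (p * q))
          * (q : ZMod (p * q))))) := by
      rw [MulAut.conj_apply, hfx, ← map_inv]
      exact (SemidirectProduct.inl_aut z _).symm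
    rw [hconj, h.phiG_r', h.phiF_apply, hfx]
    show SemidirectProduct.inl (DihedralGroup.r _) = SemidirectProduct.inl (DihedralGroup.r _)
    congr 2
    simp only [toAdd_ofAdd]
    exact h.key5 (toAdd z).val (toAdd x)
  let F : Fpq h →* Gpq h := SemidirectProduct.lift fp SemidirectProduct.inr hcomp
  have hFmk : ∀ (s : Multiplicative (ZMod p)) (z : Multiplicative (ZMod q)),
      F ⟨s, z⟩ = ⟨DihedralGroup.r ((((toAdd s).val : ℕ) : ZMod (p * q)) * (q : ZMod (p * q))), z⟩ := by
    intro s z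
    rw [SemidirectProduct.mk_eq_inl_mul_inr, map_mul, SemidirectProduct.lift_inl,
      SemidirectProduct.lift_inr, hfx]
    have h9 : (SemidirectProduct.inr z : Gpq h) = ⟨1, z⟩ := rfl
    rw [h9, mk_mul]
    simp
  have hmem : ∀ x, F x ∈ NpqTwoSub h := by
    rintro ⟨s, z⟩
    rw [hFmk]
    exact ⟨(((toAdd s).val : ℕ) : ZMod (p * q)), congrArg DihedralGroup.r (mul_comm _ _)⟩
  let F' := F.codRestrict (NpqTwoSub h) hmem
  have hinj : Function.Injective F' := by
    rw [injective_iff_map_eq_one]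
    rintro ⟨s, z⟩ ha
    have h1 : F ⟨s, z⟩ = 1 := congrArg Subtype.val ha
    rw [hFmk] at h1
    have h2 := congrArg SemidirectProduct.left h1
    have h3 := congrArg SemidirectProduct.right h1
    simp only [SemidirectProduct.one_left, SemidirectProduct.one_right] at h2 h3
    rw [DihedralGroup.one_def] at h2
    have hs : s = 1 := h.rot_q_eq_one_iff s (by injection h2)
    have hz : z = 1 := h3
    rw [hs, hz]
    rfl
  have hsurj : Function.Surjective F' := by
    rintro ⟨x, hx⟩
    obtain ⟨xl, xr⟩ := x
    obtain ⟨s, hs⟩ := hx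
    simp only at hs
    subst hs
    refine ⟨⟨ofAdd (cP p q s), xr⟩, ?_⟩
    apply Subtype.ext
    show F _ = _
    rw [hFmk]
    congr 1
    rw [toAdd_ofAdd, h.q_mul_val]
    congr 1
    ring
  exact ⟨(MulEquiv.ofBijective F' ⟨hinj, hsurj⟩).symm⟩

end Hyp

end Isos

end Mizerka

open Mizerka in
/-- The nontrivial proper normal subgroups of `G_{p,q}` are exactly
`N_p, N_q, N¹_{pq}, N²_{pq}, N_{2pq}, N_{pq²}`, and moreover `N_p ≅ C_p`, `N_q ≅ C_q`,
`N¹_{pq} ≅ C_{pq}`, `N²_{pq} ≅ F_{p,q}`, `N_{2pq} ≅ D_{2pq}`. -/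
theorem statement_13 {p q i : ℕ} (h : Hyp p q i) :
    (∀ N : Subgroup (Gpq h), (N.Normal ∧ N ≠ ⊥ ∧ N ≠ ⊤) ↔
      N ∈ ({NpSub h, NqSub h, NpqOneSub h, NpqTwoSub h, N2pqSub h, NSub h} :
        Set (Subgroup (Gpq h)))) ∧
    Nonempty (↥(NpSub h) ≃* Multiplicative (ZMod p)) ∧
    Nonempty (↥(NqSub h) ≃* Multiplicative (ZMod q)) ∧
    Nonempty (↥(NpqOneSub h) ≃* Multiplicative (ZMod (p * q))) ∧
    Nonempty (↥(NpqTwoSub h) ≃* Fpq h) ∧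
    Nonempty (↥(N2pqSub h) ≃* DihedralGroup (p * q)) := by
  refine ⟨?_, h.iso_Np, h.iso_Nq, h.iso_NpqOne, h.iso_NpqTwo, h.iso_N2pq⟩
  intro N
  constructor
  · rintro ⟨hN, hbot, htop⟩
    have hcl := h.classify N hN hbot htop
    simp only [Set.mem_insert_iff, Set.mem_singleton_iff]
    tauto
  · intro hmem
    simp only [Set.mem_insert_iff, Set.mem_singleton_iff] at hmem
    rcases hmem with rfl | rfl | rfl | rfl | rfl | rfl
    · exact ⟨h.normal_NpSub, h.NpSub_ne_bot, h.NpSub_ne_top⟩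
    · exact ⟨h.normal_NqSub, h.NqSub_ne_bot, h.NqSub_ne_top⟩
    · exact ⟨h.normal_NpqOneSub, h.NpqOneSub_ne_bot, h.NpqOneSub_ne_top⟩
    · exact ⟨h.normal_NpqTwoSub, h.NpqTwoSub_ne_bot, h.NpqTwoSub_ne_top⟩
    · exact ⟨h.normal_N2pqSub, h.N2pqSub_ne_bot, h.N2pqSub_ne_top⟩
    · exact ⟨h.normal_NSub, h.NSub_ne_bot, h.NSub_ne_top⟩
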